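/- arXiv:1903.08379 — 2 statements merged into one kernel-verified Lean document; each statement's English description precedes it below -/
import Mathlib

section
/- For every fixed n ≥ 2 and every fixed k with 2 ≤ k ≤ n, the m-th order Stirling number S^(m)(n,k) is negligible compared with B_n^(m) as m → ∞; that is, lim_{m→∞} S^(m)(n,k) / B_n^(m) = 0. -/
/-- `m`-th order ("hyper") partitions of a finite set `s`:
a chain `(P₁, …, P_m)` where `P₁` is a partition of `s` and each `P_{j+1}`
is a partition of the set of blocks of `P_j`. For `m = 0` it is `s` itself
(a single trivial object). -/
def HyperPartition : (m : ℕ) → {α : Type} → [DecidableEq α] → Finset α → Type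
  | 0, _, _, _ => PUnit
  | m + 1, _, _, s => (P : Finpartition s) × HyperPartition m P.parts

/-- The number of blocks of the outermost partition of a hyper partition
(for `m = 0`, by convention, the cardinality of the underlying set). -/
def HyperPartition.outerBlocks :
    (m : ℕ) → {α : Type} → [DecidableEq α] → {s : Finset α} →
      HyperPartition m s → ℕ
  | 0, _, _, s, _ => s.card
  | 1, _, _, _, p => p.1.parts.card
  | m + 2, _, _, _, p => HyperPartition.outerBlocks (m + 1) p.2

/-- `|℘ₙ^(m)|`: the number of `m`-th order partitions of an `n`-element set. -/
noncomputable def hyperBell (m n : ℕ) : ℕ :=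
  Nat.card (HyperPartition m (Finset.univ : Finset (Fin n)))

/-- The `m`-th order Stirling number `S^(m)(n,k)`: the number of `m`-th order
partitions of an `n`-element set whose outermost partition has exactly `k` blocks. -/
noncomputable def hyperStirling (m n k : ℕ) : ℕ :=
  Nat.card {p : HyperPartition m (Finset.univ : Finset (Fin n)) //
    HyperPartition.outerBlocks m p = k}

/-- The ordinary Stirling number of the second kind `S(n,k)`: the number of
set partitions of an `n`-element set into exactly `k` blocks. -/
noncomputable def stirling (n k : ℕ) : ℕ :=
  Nat.card {P : Finpartition (Finset.univ : Finset (Fin n)) // P.parts.card = k}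

/-- Composition `f(g(x))` of formal power series (intended for `g` with zero
constant term, in which case `coeff n (g ^ i) = 0` for `i > n`). -/
noncomputable def psComp (f g : PowerSeries ℚ) : PowerSeries ℚ :=
  PowerSeries.mk fun n =>
    PowerSeries.coeff (R := ℚ) n
      (∑ i ∈ Finset.range (n + 1), PowerSeries.C (R := ℚ) (PowerSeries.coeff (R := ℚ) i f) * g ^ i)

/-- The iterated exponential series: `E₀ = exp x`, `E_{m+1} = exp (E_m - 1)`. -/
noncomputable def E : ℕ → PowerSeries ℚ
  | 0 => PowerSeries.exp ℚ
  | m + 1 => psComp (PowerSeries.exp ℚ) (E m - 1)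

/-- The `m`-th order Bell number `Bₙ^(m) = n! · [xⁿ] E_m(x)`. -/
noncomputable def bell (m n : ℕ) : ℚ :=
  (n.factorial : ℚ) * PowerSeries.coeff (R := ℚ) n (E m)


-- ============ auxiliary material ============

section Analytic
open PowerSeries Finset


lemma coeff_psComp_exp (g : PowerSeries ℚ) (n : ℕ) :
    coeff (R := ℚ) n (psComp (PowerSeries.exp ℚ) g) =
      ∑ i ∈ Finset.range (n + 1), (1 / (i.factorial : ℚ)) * coeff (R := ℚ) n (g ^ i) := by
  simp [psComp, coeff_mk, map_sum, coeff_C_mul, coeff_exp]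

lemma coeff_mul_nonneg {f g : PowerSeries ℚ} (hf : ∀ j, 0 ≤ coeff (R := ℚ) j f)
    (hg : ∀ j, 0 ≤ coeff (R := ℚ) j g) (n : ℕ) : 0 ≤ coeff (R := ℚ) n (f * g) := by
  rw [coeff_mul]
  exact Finset.sum_nonneg fun p _ => mul_nonneg (hf _) (hg _)

lemma coeff_pow_nonneg {g : PowerSeries ℚ} (hg : ∀ j, 0 ≤ coeff (R := ℚ) j g) (i n : ℕ) :
    0 ≤ coeff (R := ℚ) n (g ^ i) := by
  induction i generalizing n with
  | zero => simp [coeff_one]; positivity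
  | succ i ih => rw [pow_succ]; exact coeff_mul_nonneg ih hg n

lemma E_succ (m : ℕ) : E (m + 1) = psComp (PowerSeries.exp ℚ) (E m - 1) := rfl

lemma E_basic (m : ℕ) : coeff (R := ℚ) 0 (E m) = 1 ∧ ∀ j, 0 ≤ coeff (R := ℚ) j (E m) := by
  induction m with
  | zero =>
    constructor
    · simp [E, coeff_exp]
    · intro j
      rw [show E 0 = PowerSeries.exp ℚ from rfl, coeff_exp]
      simp
  | succ m ih =>
    obtain ⟨h0, hnn⟩ := ih
    have hg : ∀ j, 0 ≤ coeff (R := ℚ) j (E m - 1) := by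
      intro j
      rcases Nat.eq_zero_or_pos j with rfl | hj
      · rw [map_sub, h0, coeff_one]; norm_num
      · rw [map_sub, coeff_one, if_neg (Nat.pos_iff_ne_zero.mp hj)]
        simpa using hnn j
    constructor
    · rw [E_succ, coeff_psComp_exp]
      simp [coeff_one]
    · intro j
      rw [E_succ, coeff_psComp_exp]
      refine Finset.sum_nonneg fun i _ => mul_nonneg (by positivity) (coeff_pow_nonneg hg i j)

lemma coeff_E_zero (m : ℕ) : coeff (R := ℚ) 0 (E m) = 1 := (E_basic m).1

lemma coeff_E_nonneg (m j : ℕ) : 0 ≤ coeff (R := ℚ) j (E m) := (E_basic m).2 j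

lemma coeff_g_nonneg (m : ℕ) : ∀ j, 0 ≤ coeff (R := ℚ) j (E m - 1) := by
  intro j
  rcases Nat.eq_zero_or_pos j with rfl | hj
  · rw [map_sub, coeff_E_zero, coeff_one]; norm_num
  · rw [map_sub, coeff_one, if_neg (Nat.pos_iff_ne_zero.mp hj)]
    simpa using coeff_E_nonneg m j

lemma coeff_g_eq (m j : ℕ) (hj : j ≠ 0) : coeff (R := ℚ) j (E m - 1) = coeff (R := ℚ) j (E m) := by
  rw [map_sub, coeff_one, if_neg hj, sub_zero]

lemma coeff_E_one (m : ℕ) : coeff (R := ℚ) 1 (E m) = 1 := by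
  induction m with
  | zero => simp [E, coeff_exp]
  | succ m ih =>
    rw [E_succ, coeff_psComp_exp]
    rw [Finset.sum_range_succ, Finset.sum_range_one]
    simp [coeff_one, coeff_g_eq m 1 one_ne_zero, ih]

lemma coeff_E_pos (m n : ℕ) : 0 < coeff (R := ℚ) n (E m) := by
  induction m generalizing n with
  | zero =>
    rw [show E 0 = PowerSeries.exp ℚ from rfl, coeff_exp]
    simp
    positivity
  | succ m ih =>
    rcases Nat.eq_zero_or_pos n with rfl | hn
    · rw [coeff_E_zero]; norm_num
    · rw [E_succ, coeff_psComp_exp]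
      have h1 : (1 : ℕ) ∈ Finset.range (n + 1) := by
        simp [Nat.lt_succ_iff]; omega
      have hterm : (1 / ((1 : ℕ).factorial : ℚ)) * coeff (R := ℚ) n ((E m - 1) ^ 1)
          = coeff (R := ℚ) n (E m) := by
        simp [coeff_g_eq m n (Nat.pos_iff_ne_zero.mp hn)]
      calc (0 : ℚ) < coeff (R := ℚ) n (E m) := ih n
        _ = (1 / ((1 : ℕ).factorial : ℚ)) * coeff (R := ℚ) n ((E m - 1) ^ 1) := hterm.symm
        _ ≤ _ := Finset.single_le_sum
            (f := fun i => (1 / (i.factorial : ℚ)) * coeff (R := ℚ) n ((E m - 1) ^ i))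
            (fun i _ => mul_nonneg (by positivity) (coeff_pow_nonneg (coeff_g_nonneg m) i n)) h1

lemma key_step (m j : ℕ) :
    coeff (R := ℚ) (j + 2) (E m) + coeff (R := ℚ) (j + 1) (E m) / 2 ≤ coeff (R := ℚ) (j + 2) (E (m + 1)) := by
  set g := E m - 1 with hgdef
  have hg := coeff_g_nonneg m
  rw [E_succ, coeff_psComp_exp]
  have hsub : ({1, 2} : Finset ℕ) ⊆ Finset.range (j + 3) := by
    intro i hi
    fin_cases hi <;> simp
  have hnn : ∀ i ∈ Finset.range (j + 3), i ∉ ({1, 2} : Finset ℕ) →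
      0 ≤ (1 / (i.factorial : ℚ)) * coeff (R := ℚ) (j + 2) (g ^ i) :=
    fun i _ _ => mul_nonneg (by positivity) (coeff_pow_nonneg hg i _)
  have hmain := Finset.sum_le_sum_of_subset_of_nonneg hsub hnn
  have hpair : ∑ i ∈ ({1, 2} : Finset ℕ), (1 / (i.factorial : ℚ)) * coeff (R := ℚ) (j + 2) (g ^ i)
      = coeff (R := ℚ) (j + 2) g + coeff (R := ℚ) (j + 2) (g * g) / 2 := by
    rw [Finset.sum_pair (by norm_num)]
    norm_num [Nat.factorial, pow_two]
    ring
  -- bound coeff (j+2) (g*g) from below by the (1, j+1) term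
  have hg2 : coeff (R := ℚ) (j + 1) (E m) ≤ coeff (R := ℚ) (j + 2) (g * g) := by
    rw [coeff_mul]
    have hmem : ((1 : ℕ), j + 1) ∈ Finset.HasAntidiagonal.antidiagonal (j + 2) := by
      simp; omega
    have : coeff (R := ℚ) 1 g * coeff (R := ℚ) (j + 1) g = coeff (R := ℚ) (j + 1) (E m) := by
      rw [hgdef, coeff_g_eq m 1 one_ne_zero, coeff_g_eq m (j + 1) (Nat.succ_ne_zero j),
        coeff_E_one, one_mul]
    calc coeff (R := ℚ) (j + 1) (E m) = coeff (R := ℚ) 1 g * coeff (R := ℚ) (j + 1) g := this.symm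
      _ ≤ _ := Finset.single_le_sum
          (f := fun p : ℕ × ℕ => coeff (R := ℚ) p.1 g * coeff (R := ℚ) p.2 g)
          (fun p _ => mul_nonneg (hg _) (hg _)) hmem
  have hge : coeff (R := ℚ) (j + 2) g = coeff (R := ℚ) (j + 2) (E m) := coeff_g_eq m _ (by omega)
  calc coeff (R := ℚ) (j + 2) (E m) + coeff (R := ℚ) (j + 1) (E m) / 2
      ≤ coeff (R := ℚ) (j + 2) g + coeff (R := ℚ) (j + 2) (g * g) / 2 := by rw [hge]; linarith
    _ = ∑ i ∈ ({1, 2} : Finset ℕ), (1 / (i.factorial : ℚ)) * coeff (R := ℚ) (j + 2) (g ^ i) :=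
        hpair.symm
    _ ≤ _ := hmain

lemma coeff_E_lower (m n : ℕ) (hn : 1 ≤ n) :
    (Nat.choose m (n - 1) : ℚ) / 2 ^ (n - 1) ≤ coeff (R := ℚ) n (E m) := by
  induction m generalizing n with
  | zero =>
    rcases Nat.lt_or_ge n 2 with h | h
    · interval_cases n
      simp [coeff_E_one]
    · obtain ⟨j, rfl⟩ : ∃ j, n = j + 2 := ⟨n - 2, by omega⟩
      have : Nat.choose 0 (j + 2 - 1) = 0 := by simp
      rw [this]
      simpa using (coeff_E_pos 0 (j + 2)).le
  | succ m ih =>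
    rcases Nat.lt_or_ge n 2 with h | h
    · interval_cases n
      simp [coeff_E_one]
    · obtain ⟨j, rfl⟩ : ∃ j, n = j + 2 := ⟨n - 2, by omega⟩
      have h1 := ih (j + 2) (by omega)
      have h2 := ih (j + 1) (by omega)
      simp only [Nat.succ_sub_one] at h1 h2 ⊢
      have hch : (Nat.choose (m + 1) (j + 1) : ℚ) = Nat.choose m j + Nat.choose m (j + 1) := by
        rw [Nat.choose_succ_succ]
        push_cast
        ring
      have hkey := key_step m j
      have hpow : (2 : ℚ) ^ (j + 1) = 2 ^ j * 2 := pow_succ 2 j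
      rw [hch]
      rw [add_div]
      have e2 : (Nat.choose m j : ℚ) / 2 ^ (j + 1) = (Nat.choose m j : ℚ) / 2 ^ j / 2 := by
        rw [hpow, div_div]
      rw [e2]
      linarith

end Analytic

section Combinatorial

def hpFintype : (m : ℕ) → {α : Type} → [DecidableEq α] → (s : Finset α) →
    Fintype (HyperPartition m s)
  | 0, _, _, _ => inferInstanceAs (Fintype PUnit)
  | m + 1, _, _, s => by
      letI : ∀ P : Finpartition s, Fintype (HyperPartition m P.parts) :=
        fun P => hpFintype m P.parts
      exact inferInstanceAs (Fintype ((P : Finpartition s) × HyperPartition m P.parts))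

attribute [instance] hpFintype

lemma outer_zero {α : Type} [DecidableEq α] {s : Finset α} (p : HyperPartition 0 s) :
    HyperPartition.outerBlocks 0 p = s.card := rfl

lemma outer_succ {α : Type} [DecidableEq α] {s : Finset α} (m : ℕ)
    (p : HyperPartition (m + 1) s) :
    HyperPartition.outerBlocks (m + 1) p =
      HyperPartition.outerBlocks m
        ((show (P : Finpartition s) × HyperPartition m P.parts from p).2) := by
  match m with
  | 0 => rfl
  | m + 1 => rfl

lemma outer_le {α : Type} [DecidableEq α] {s : Finset α} (m : ℕ) (p : HyperPartition m s) :
    HyperPartition.outerBlocks m p ≤ s.card := by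
  induction m generalizing α with
  | zero => exact le_of_eq (outer_zero p)
  | succ m ih =>
    rw [outer_succ]
    exact le_trans (ih _) (Finpartition.card_parts_le_card _)

lemma parts_eq_of_card_parts_eq {α : Type} [DecidableEq α] {s : Finset α}
    (P : Finpartition s) (h : P.parts.card = s.card) :
    P.parts = s.image (fun x => {x}) := by
  have hsum : ∑ t ∈ P.parts, t.card = s.card := P.sum_card_parts
  have hone : ∀ t ∈ P.parts, (1 : ℕ) ≤ t.card := fun t ht =>
    Finset.card_pos.mpr (P.nonempty_of_mem_parts ht)
  have hcards : ∀ t ∈ P.parts, t.card = 1 := by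
    intro t ht
    have := (Finset.sum_eq_sum_iff_of_le hone).mp ?_ t ht
    · exact this.symm
    · rw [hsum, ← h]
      simp
  ext u
  constructor
  · intro hu
    obtain ⟨x, hx⟩ := Finset.card_eq_one.mp (hcards u hu)
    subst hx
    have hxs : x ∈ s := P.le hu (Finset.mem_singleton_self x)
    exact Finset.mem_image.mpr ⟨x, hxs, rfl⟩
  · intro hu
    obtain ⟨x, hxs, rfl⟩ := Finset.mem_image.mp hu
    obtain ⟨t, ht, hxt⟩ := P.exists_mem hxs
    obtain ⟨y, hy⟩ := Finset.card_eq_one.mp (hcards t ht)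
    subst hy
    rw [Finset.mem_singleton] at hxt
    subst hxt
    exact ht

lemma discrete_unique {α : Type} [DecidableEq α] {s : Finset α}
    (P Q : Finpartition s) (hP : P.parts.card = s.card) (hQ : Q.parts.card = s.card) :
    P = Q :=
  Finpartition.ext (by
    rw [parts_eq_of_card_parts_eq P hP, parts_eq_of_card_parts_eq Q hQ])

lemma card_finpartition_le {α : Type} [DecidableEq α] (s : Finset α) :
    Fintype.card (Finpartition s) ≤ 2 ^ 2 ^ s.card := by
  have hinj : Function.Injective
      (fun P : Finpartition s => (P.parts.subtype (· ∈ s.powerset))) := by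
    intro P Q hPQ
    dsimp only at hPQ
    apply Finpartition.ext
    have hmemP : ∀ t ∈ P.parts, t ∈ s.powerset := fun t ht =>
      Finset.mem_powerset.mpr (P.le ht)
    have hmemQ : ∀ t ∈ Q.parts, t ∈ s.powerset := fun t ht =>
      Finset.mem_powerset.mpr (Q.le ht)
    have eP : (P.parts.subtype (· ∈ s.powerset)).map
        (Function.Embedding.subtype _) = P.parts := by
      rw [Finset.subtype_map, Finset.filter_true_of_mem hmemP]
    have eQ : (Q.parts.subtype (· ∈ s.powerset)).map
        (Function.Embedding.subtype _) = Q.parts := by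
      rw [Finset.subtype_map, Finset.filter_true_of_mem hmemQ]
    rw [← eP, ← eQ, hPQ]
  calc Fintype.card (Finpartition s)
      ≤ Fintype.card (Finset {t : Finset α // t ∈ s.powerset}) :=
        Fintype.card_le_of_injective _ hinj
    _ = 2 ^ 2 ^ s.card := by
        rw [Fintype.card_finset, Fintype.card_coe, Finset.card_powerset]

def hpA (N : ℕ) : ℕ := 2 ^ 2 ^ N

def hpC (N : ℕ) : ℕ := (hpA N + 1) ^ N

def hpF (m N : ℕ) : ℕ := if N ≤ 1 then 0 else hpC N * (m + 1) ^ (N - 2)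

lemma hpA_mono : Monotone hpA := fun a b h =>
  Nat.pow_le_pow_right (by norm_num) (Nat.pow_le_pow_right (by norm_num) h)

lemma hpC_pos (N : ℕ) : 0 < hpC N := Nat.pow_pos (by positivity)

lemma hpC_mono : Monotone hpC := by
  intro a b h
  calc hpC a = (hpA a + 1) ^ a := rfl
    _ ≤ (hpA b + 1) ^ a := Nat.pow_le_pow_left (by have := hpA_mono h; omega) a
    _ ≤ (hpA b + 1) ^ b := Nat.pow_le_pow_right (by positivity) h

lemma hpC_step (N : ℕ) (hN : 1 ≤ N) : hpA N * hpC (N - 1) ≤ hpC N := by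
  obtain ⟨d, rfl⟩ : ∃ d, N = d + 1 := ⟨N - 1, by omega⟩
  calc hpA (d + 1) * hpC d ≤ (hpA (d + 1) + 1) * (hpA (d + 1) + 1) ^ d := by
        apply Nat.mul_le_mul (by omega)
        calc hpC d = (hpA d + 1) ^ d := rfl
          _ ≤ (hpA (d + 1) + 1) ^ d :=
            Nat.pow_le_pow_left (by have := hpA_mono (by omega : d ≤ d + 1); omega) d
    _ = hpC (d + 1) := by rw [hpC]; ring

lemma hpF_mono (m : ℕ) : Monotone (hpF m) := by
  apply monotone_nat_of_le_succ
  intro N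
  by_cases h : N ≤ 1
  · simp [hpF, h]
  · have h2 : ¬ N + 1 ≤ 1 := by omega
    simp only [hpF, if_neg h, if_neg h2]
    exact Nat.mul_le_mul (hpC_mono (Nat.le_succ N))
      (Nat.pow_le_pow_right (by omega) (by omega))

lemma hpF_step (m N : ℕ) : hpF m N + hpA N * hpF m (N - 1) ≤ hpF (m + 1) N := by
  rcases Nat.lt_or_ge N 2 with h | h
  · have h1 : N ≤ 1 := by omega
    have h2 : N - 1 ≤ 1 := by omega
    simp [hpF, h1, h2]
  rcases Nat.lt_or_ge N 3 with h3 | h3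
  · -- N = 2
    obtain rfl : N = 2 := by omega
    simp [hpF]
  · obtain ⟨r, rfl⟩ : ∃ r, N = r + 3 := ⟨N - 3, by omega⟩
    have e1 : ¬ r + 3 ≤ 1 := by omega
    have e2 : ¬ r + 3 - 1 ≤ 1 := by omega
    simp only [hpF, if_neg e1, if_neg e2]
    have e3 : r + 3 - 1 = r + 2 := rfl
    have e4 : r + 3 - 2 = r + 1 := rfl
    have e5 : r + 2 - 2 = r := rfl
    rw [e3, e4, e5]
    calc hpC (r + 3) * (m + 1) ^ (r + 1) + hpA (r + 3) * (hpC (r + 2) * (m + 1) ^ r)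
        ≤ hpC (r + 3) * (m + 1) ^ (r + 1) + hpC (r + 3) * (m + 1) ^ r := by
          have := hpC_step (r + 3) (by omega)
          have e : r + 3 - 1 = r + 2 := rfl
          rw [e] at this
          have h5 := Nat.mul_le_mul_right ((m + 1) ^ r) this
          rw [← mul_assoc]
          exact Nat.add_le_add_left h5 _
      _ = hpC (r + 3) * ((m + 2) * (m + 1) ^ r) := by ring
      _ ≤ hpC (r + 3) * ((m + 2) * (m + 2) ^ r) :=
          Nat.mul_le_mul_left _ (Nat.mul_le_mul_left _ (Nat.pow_le_pow_left (by omega) r))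
      _ = hpC (r + 3) * (m + 2) ^ (r + 1) := by ring

lemma count_le : ∀ (m : ℕ) {α : Type} [DecidableEq α] (s : Finset α) (k : ℕ), 2 ≤ k →
    Fintype.card {p : HyperPartition m s // HyperPartition.outerBlocks m p = k} ≤
      hpF m s.card := by
  intro m
  induction m with
  | zero =>
    intro α _ s k hk
    by_cases h : s.card = k
    · haveI : Subsingleton (HyperPartition 0 s) := inferInstanceAs (Subsingleton PUnit)
      have h1 : Fintype.card
          {p : HyperPartition 0 s // HyperPartition.outerBlocks 0 p = k} ≤ 1 :=
        Fintype.card_le_one_iff_subsingleton.mpr inferInstance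
      refine h1.trans ?_
      have h2 : ¬ s.card ≤ 1 := by omega
      simp only [hpF, if_neg h2]
      exact Nat.succ_le_of_lt (Nat.mul_pos (hpC_pos _) (Nat.pow_pos (by omega)))
    · haveI : IsEmpty {p : HyperPartition 0 s // HyperPartition.outerBlocks 0 p = k} :=
        ⟨fun x => h ((outer_zero x.1).symm.trans x.2)⟩
      simp [Fintype.card_eq_zero]
  | succ m ih =>
    intro α _ s k hk
    have e : {p : HyperPartition (m + 1) s // HyperPartition.outerBlocks (m + 1) p = k} ≃
        Σ P : Finpartition s,
          {q : HyperPartition m P.parts // HyperPartition.outerBlocks m q = k} :=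
      { toFun := fun x => match x with
          | ⟨⟨P, q⟩, h⟩ => ⟨P, q, (outer_succ m ⟨P, q⟩).symm.trans h⟩
        invFun := fun y => match y with
          | ⟨P, q, h⟩ => ⟨⟨P, q⟩, (outer_succ m ⟨P, q⟩).trans h⟩
        left_inv := fun x => match x with
          | ⟨⟨P, q⟩, h⟩ => rfl
        right_inv := fun y => match y with
          | ⟨P, q, h⟩ => rfl }
    rw [Fintype.card_congr e, Fintype.card_sigma]
    set N := s.card with hN
    set g := fun P : Finpartition s =>
      Fintype.card {q : HyperPartition m P.parts // HyperPartition.outerBlocks m q = k}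
      with hg
    have hsplit :
        ∑ P : Finpartition s, g P =
          ∑ P ∈ Finset.univ.filter (fun P : Finpartition s => P.parts.card = N), g P +
          ∑ P ∈ Finset.univ.filter (fun P : Finpartition s => ¬ P.parts.card = N), g P :=
      (Finset.sum_filter_add_sum_filter_not _ _ _).symm
    have hfirst :
        ∑ P ∈ Finset.univ.filter (fun P : Finpartition s => P.parts.card = N), g P ≤
          hpF m N := by
      refine le_trans (Finset.sum_le_card_nsmul _ _ (hpF m N) ?_) ?_
      · intro P hP
        have hPc : P.parts.card = N := (Finset.mem_filter.mp hP).2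
        have := ih P.parts k hk
        rwa [hPc] at this
      · have hcard1 : (Finset.univ.filter
            (fun P : Finpartition s => P.parts.card = N)).card ≤ 1 := by
          refine Finset.card_le_one.mpr ?_
          intro P hP Q hQ
          exact discrete_unique P Q (Finset.mem_filter.mp hP).2 (Finset.mem_filter.mp hQ).2
        calc _ ≤ 1 * hpF m N := by
              rw [smul_eq_mul]
              exact Nat.mul_le_mul_right _ hcard1
          _ = hpF m N := one_mul _
    have hsecond :
        ∑ P ∈ Finset.univ.filter (fun P : Finpartition s => ¬ P.parts.card = N), g P ≤
          hpA N * hpF m (N - 1) := by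
      refine le_trans (Finset.sum_le_card_nsmul _ _ (hpF m (N - 1)) ?_) ?_
      · intro P hP
        have hPne : ¬ P.parts.card = N := (Finset.mem_filter.mp hP).2
        have hle : P.parts.card ≤ N - 1 := by
          have := P.card_parts_le_card
          omega
        exact le_trans (ih P.parts k hk) (hpF_mono m hle)
      · rw [smul_eq_mul]
        refine Nat.mul_le_mul_right _ ?_
        calc (Finset.univ.filter fun P : Finpartition s => ¬ P.parts.card = N).card
            ≤ (Finset.univ : Finset (Finpartition s)).card := Finset.card_filter_le _ _
          _ = Fintype.card (Finpartition s) := Finset.card_univ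
          _ ≤ hpA N := card_finpartition_le s
    calc ∑ P : Finpartition s, g P ≤ hpF m N + hpA N * hpF m (N - 1) := by
          rw [hsplit]; exact Nat.add_le_add hfirst hsecond
      _ ≤ hpF (m + 1) N := hpF_step m N

end Combinatorial

section Bell

lemma bell_pos (m n : ℕ) : 0 < bell m n :=
  mul_pos (by positivity) (coeff_E_pos m n)

lemma bell_lower (m n : ℕ) (hn : 1 ≤ n) :
    (Nat.choose m (n - 1) : ℚ) / 2 ^ (n - 1) ≤ bell m n := by
  have h1 : (1 : ℚ) ≤ (n.factorial : ℚ) := by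
    exact_mod_cast Nat.one_le_iff_ne_zero.mpr n.factorial_ne_zero
  calc (Nat.choose m (n - 1) : ℚ) / 2 ^ (n - 1) ≤ PowerSeries.coeff (R := ℚ) n (E m) :=
        coeff_E_lower m n hn
    _ = 1 * PowerSeries.coeff (R := ℚ) n (E m) := (one_mul _).symm
    _ ≤ (n.factorial : ℚ) * PowerSeries.coeff (R := ℚ) n (E m) :=
        mul_le_mul_of_nonneg_right h1 (coeff_E_nonneg m n)

lemma hyperStirling_le (m n k : ℕ) (hn : 2 ≤ n) (hk : 2 ≤ k) :
    hyperStirling m n k ≤ hpC n * (m + 1) ^ (n - 2) := by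
  have h := count_le m (Finset.univ : Finset (Fin n)) k hk
  rw [Finset.card_univ, Fintype.card_fin] at h
  rw [hyperStirling, Nat.card_eq_fintype_card]
  calc Fintype.card _ ≤ hpF m n := h
    _ = hpC n * (m + 1) ^ (n - 2) := by rw [hpF, if_neg (by omega)]

end Bell

/-- for fixed `n ≥ 2` and `2 ≤ k ≤ n`, `lim_{m→∞} S^(m)(n,k) / Bₙ^(m) = 0`. -/
theorem stmt17 (n k : ℕ) (hn : 2 ≤ n) (hk : 2 ≤ k) (hkn : k ≤ n) :
    Filter.Tendsto (fun m : ℕ => (hyperStirling m n k : ℚ) / bell m n)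
      Filter.atTop (nhds 0) := by
  obtain ⟨j, rfl⟩ : ∃ j, n = j + 2 := ⟨n - 2, by omega⟩
  set D : ℚ := (hpC (j + 2) : ℚ) * 4 ^ (j + 1) * ((j + 1).factorial : ℚ) with hDdef
  have hDnn : 0 ≤ D := by positivity
  have hD4 : (4 : ℚ) ^ (j + 1) = 2 ^ (j + 1) * 2 ^ (j + 1) := by
    rw [← mul_pow]; norm_num
  have htend : Filter.Tendsto (fun m : ℕ => D / ((m : ℚ) + 1)) Filter.atTop (nhds 0) :=
    Filter.Tendsto.div_atTop tendsto_const_nhds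
      (Filter.tendsto_atTop_add_const_right _ 1 tendsto_natCast_atTop_atTop)
  refine tendsto_of_tendsto_of_tendsto_of_le_of_le' tendsto_const_nhds htend
    (Filter.Eventually.of_forall fun m =>
      div_nonneg (Nat.cast_nonneg _) (bell_pos m (j + 2)).le) ?_
  rw [Filter.eventually_atTop]
  refine ⟨2 * j + 4, fun m hm => ?_⟩
  have hBpos := bell_pos m (j + 2)
  have hm1 : (0 : ℚ) < (m : ℚ) + 1 := by positivity
  rw [div_le_div_iff₀ hBpos hm1]
  -- the Stirling upper bound, cast to ℚ
  have hS : (hyperStirling m (j + 2) k : ℚ) ≤ (hpC (j + 2) : ℚ) * ((m : ℚ) + 1) ^ j := by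
    have := hyperStirling_le m (j + 2) k (by omega) hk
    have h2 : j + 2 - 2 = j := rfl
    rw [h2] at this
    exact_mod_cast this
  -- the Bell lower bound
  have hB : (Nat.choose m (j + 1) : ℚ) / 2 ^ (j + 1) ≤ bell m (j + 2) := by
    have := bell_lower m (j + 2) (by omega)
    have h2 : j + 2 - 1 = j + 1 := rfl
    rwa [h2] at this
  -- binomial coefficient lower bound, in ℕ then cast
  have hchN : (m + 1) ^ (j + 1) ≤ 2 ^ (j + 1) * ((j + 1).factorial * Nat.choose m (j + 1)) := by
    have hprod : (m - j) ^ (j + 1) ≤ Nat.descFactorial m (j + 1) := by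
      rw [Nat.descFactorial_eq_prod_range]
      have := Finset.pow_card_le_prod (Finset.range (j + 1)) (fun i => m - i) (m - j)
        (fun i hi => by
          have hlt : i < j + 1 := Finset.mem_range.mp hi
          show m - j ≤ m - i
          omega)
      rwa [Finset.card_range] at this
    calc (m + 1) ^ (j + 1) ≤ (2 * (m - j)) ^ (j + 1) :=
          Nat.pow_le_pow_left (by omega) _
      _ = 2 ^ (j + 1) * (m - j) ^ (j + 1) := by rw [mul_pow]
      _ ≤ 2 ^ (j + 1) * Nat.descFactorial m (j + 1) := Nat.mul_le_mul_left _ hprod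
      _ = 2 ^ (j + 1) * ((j + 1).factorial * Nat.choose m (j + 1)) := by
          rw [Nat.descFactorial_eq_factorial_mul_choose]
  have hch : ((m : ℚ) + 1) ^ (j + 1) ≤
      2 ^ (j + 1) * ((j + 1).factorial : ℚ) * (Nat.choose m (j + 1) : ℚ) := by
    have := hchN
    have hc : (((m + 1) ^ (j + 1) : ℕ) : ℚ) ≤
        ((2 ^ (j + 1) * ((j + 1).factorial * Nat.choose m (j + 1)) : ℕ) : ℚ) := by
      exact_mod_cast this
    push_cast at hc
    linarith
  calc (hyperStirling m (j + 2) k : ℚ) * ((m : ℚ) + 1)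
      ≤ (hpC (j + 2) : ℚ) * ((m : ℚ) + 1) ^ j * ((m : ℚ) + 1) :=
        mul_le_mul_of_nonneg_right hS hm1.le
    _ = (hpC (j + 2) : ℚ) * ((m : ℚ) + 1) ^ (j + 1) := by ring
    _ ≤ (hpC (j + 2) : ℚ) *
        (2 ^ (j + 1) * ((j + 1).factorial : ℚ) * (Nat.choose m (j + 1) : ℚ)) :=
        mul_le_mul_of_nonneg_left hch (Nat.cast_nonneg _)
    _ = D * ((Nat.choose m (j + 1) : ℚ) / 2 ^ (j + 1)) := by
        rw [hDdef, hD4]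
        field_simp
    _ ≤ D * bell m (j + 2) := mul_le_mul_of_nonneg_left hB hDnn
end

section
/- For every fixed n ≥ 1, the average number of blocks of the outermost partition of an m-th order partition of an n-element set tends to 1 as m → ∞; that is, A_n^(m) := (1/B_n^(m)) · Σ_{k=1}^n k · S^(m)(n,k) satisfies lim_{m→∞} A_n^(m) = 1. -/
section Aux

open Finset

variable {α β : Type} [DecidableEq α] [DecidableEq β]

theorem image_roundtrip {s : Finset α} {f : α → β} {g : β → α}
    (hfg : ∀ a ∈ s, g (f a) = a) {b : Finset α} (hb : b ⊆ s) :
    (b.image f).image g = b := by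
  rw [Finset.image_image]
  have h1 : b.image (g ∘ f) = b.image id := Finset.image_congr (fun x hx => hfg x (hb hx))
  rw [h1, Finset.image_id]

/-- Transfer a finpartition along maps behaving like a bijection on the ground sets. -/
def Finpartition.transfer {s : Finset α} {t : Finset β} (f : α → β) (g : β → α)
    (hfg : ∀ a ∈ s, g (f a) = a) (hst : s.image f = t) (P : Finpartition s) :
    Finpartition t where
  parts := P.parts.image (fun b => b.image f)
  supIndep := by
    rw [Finset.supIndep_iff_pairwiseDisjoint]
    rintro _ hb _ hc hbc
    simp only [coe_image, Set.mem_image, mem_coe] at hb hc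
    obtain ⟨b, hb, rfl⟩ := hb
    obtain ⟨c, hc, rfl⟩ := hc
    have hbc' : b ≠ c := by rintro rfl; exact hbc rfl
    have hd := P.disjoint hb hc hbc'
    simp only [Function.onFun, id] at hd ⊢
    rw [Finset.disjoint_left]
    intro x hx hx'
    simp only [mem_image] at hx hx'
    obtain ⟨a, ha, rfl⟩ := hx
    obtain ⟨a', ha', he⟩ := hx'
    have has : a ∈ s := P.le hb ha
    have ha's : a' ∈ s := P.le hc ha'
    have : a' = a := by
      have := congrArg g he
      rwa [hfg _ ha's, hfg _ has] at this
    subst this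
    exact Finset.disjoint_left.1 hd ha ha'
  sup_parts := by
    subst hst
    ext y
    simp only [Finset.sup_eq_biUnion, mem_biUnion, mem_image, id]
    constructor
    · rintro ⟨u, ⟨b, hb, rfl⟩, hy⟩
      simp only [mem_image] at hy
      obtain ⟨x, hx, rfl⟩ := hy
      exact ⟨x, P.le hb hx, rfl⟩
    · rintro ⟨x, hx, rfl⟩
      have hx' : x ∈ P.parts.sup id := by rw [P.sup_parts]; exact hx
      rw [Finset.sup_eq_biUnion, mem_biUnion] at hx'
      obtain ⟨b, hb, hxb⟩ := hx'
      exact ⟨b.image f, ⟨b, hb, rfl⟩, mem_image_of_mem f hxb⟩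
  bot_notMem := by
    intro h
    simp only [bot_eq_empty, mem_image] at h
    obtain ⟨b, hb, hbe⟩ := h
    obtain ⟨x, hx⟩ := P.nonempty_of_mem_parts hb
    have : f x ∈ b.image f := mem_image_of_mem f hx
    rw [hbe] at this
    exact notMem_empty _ this

theorem Finpartition.transfer_parts_card {s : Finset α} {t : Finset β} (f : α → β) (g : β → α)
    (hfg : ∀ a ∈ s, g (f a) = a) (hst : s.image f = t) (P : Finpartition s) :
    (P.transfer f g hfg hst).parts.card = P.parts.card := by
  apply Finset.card_image_of_injOn
  intro b hb c hc h
  simp only [mem_coe] at hb hc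
  have : (b.image f).image g = (c.image f).image g := by
    simpa using congrArg (Finset.image g) h
  rwa [image_roundtrip hfg (P.le hb), image_roundtrip hfg (P.le hc)] at this

theorem Finpartition.transfer_transfer {s : Finset α} {t : Finset β} (f : α → β) (g : β → α)
    (hfg : ∀ a ∈ s, g (f a) = a) (hgf : ∀ b ∈ t, f (g b) = b)
    (hst : s.image f = t) (hts : t.image g = s)
    (P : Finpartition s) :
    (P.transfer f g hfg hst).transfer g f hgf hts = P := by
  ext b
  simp only [Finpartition.transfer, mem_image]
  constructor
  · rintro ⟨c, ⟨d, hd, rfl⟩, rfl⟩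
    rwa [image_roundtrip hfg (P.le hd)]
  · intro hb
    exact ⟨b.image f, ⟨b, hb, rfl⟩, image_roundtrip hfg (P.le hb)⟩
open Finset
variable {α β : Type} [DecidableEq α] [DecidableEq β]

theorem card_finpartition_empty (j : ℕ) :
    Nat.card {P : Finpartition (∅ : Finset α) // P.parts.card = j} =
      if j = 0 then 1 else 0 := by
  have huniq : ∀ P : Finpartition (∅ : Finset α), P.parts = ∅ := by
    intro P
    rw [← Finset.not_nonempty_iff_eq_empty]
    intro hne
    rw [Finpartition.parts_nonempty_iff] at hne
    exact hne rfl
  split_ifs with hj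
  · subst hj
    rw [Nat.card_eq_one_iff_unique]
    constructor
    · refine ⟨fun P Q => ?_⟩
      ext1
      ext1
      rw [huniq P.1, huniq Q.1]
    · exact ⟨⟨⟨∅, by simp, by simp, by simp⟩, by simp⟩⟩
  · rw [Nat.card_eq_zero]
    left
    constructor
    rintro ⟨P, hP⟩
    rw [huniq P] at hP
    simp at hP
    exact hj hP.symm

theorem card_finpartition_transport {s : Finset α} {t : Finset β} (h : s.card = t.card) (j : ℕ) :
    Nat.card {P : Finpartition s // P.parts.card = j} =
      Nat.card {P : Finpartition t // P.parts.card = j} := by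
  rcases s.eq_empty_or_nonempty with rfl | hs
  · have ht : t = ∅ := by
      rw [← Finset.card_eq_zero, ← h]; simp
    subst ht
    rw [card_finpartition_empty, card_finpartition_empty]
  · have ht : t.Nonempty := by
      rw [← Finset.card_pos, ← h, Finset.card_pos]; exact hs
    obtain ⟨a₀, ha₀⟩ := hs
    obtain ⟨b₀, hb₀⟩ := ht
    set e := Finset.equivOfCardEq h with he
    set f : α → β := fun a => if ha : a ∈ s then (e ⟨a, ha⟩ : β) else b₀ with hf
    set g : β → α := fun b => if hb : b ∈ t then (e.symm ⟨b, hb⟩ : α) else a₀ with hg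
    have hfmem : ∀ a ∈ s, f a ∈ t := by
      intro a ha; simp only [hf, dif_pos ha]; exact (e ⟨a, ha⟩).2
    have hgmem : ∀ b ∈ t, g b ∈ s := by
      intro b hb; simp only [hg, dif_pos hb]; exact (e.symm ⟨b, hb⟩).2
    have hfg : ∀ a ∈ s, g (f a) = a := by
      intro a ha
      simp only [hf, hg, dif_pos ha]
      rw [dif_pos (e ⟨a, ha⟩).2, Subtype.coe_eta, Equiv.symm_apply_apply]
    have hgf : ∀ b ∈ t, f (g b) = b := by
      intro b hb
      simp only [hf, hg, dif_pos hb]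
      rw [dif_pos (e.symm ⟨b, hb⟩).2, Subtype.coe_eta, Equiv.apply_symm_apply]
    have hst : s.image f = t := by
      apply Finset.Subset.antisymm
      · intro b hb
        simp only [Finset.mem_image] at hb
        obtain ⟨a, ha, rfl⟩ := hb
        exact hfmem a ha
      · intro b hb
        rw [Finset.mem_image]
        exact ⟨g b, hgmem b hb, hgf b hb⟩
    have hts : t.image g = s := by
      apply Finset.Subset.antisymm
      · intro a ha
        simp only [Finset.mem_image] at ha
        obtain ⟨b, hb, rfl⟩ := ha
        exact hgmem b hb
      · intro a ha
        rw [Finset.mem_image]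
        exact ⟨f a, hfmem a ha, hfg a ha⟩
    apply Nat.card_congr
    refine Equiv.subtypeEquiv
      ⟨Finpartition.transfer f g hfg hst, Finpartition.transfer g f hgf hts,
        Finpartition.transfer_transfer f g hfg hgf hst hts,
        Finpartition.transfer_transfer g f hgf hfg hts hst⟩ fun P => ?_
    show P.parts.card = j ↔ (Finpartition.transfer f g hfg hst P).parts.card = j
    rw [Finpartition.transfer_parts_card]

variable {α : Type} [DecidableEq α]

section AddConstructions

variable {s : Finset α} {a : α}

/-- Add a new element `a` as a singleton block. -/
def Finpartition.addSing (Q : Finpartition s) (ha : a ∉ s) : Finpartition (insert a s) :=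
  Q.extend (b := {a}) (by simp)
    (by
      rw [Finset.disjoint_singleton_right]
      exact ha)
    (by rw [Finset.sup_eq_union]; ext x; simp [or_comm])

theorem Finpartition.addSing_parts (Q : Finpartition s) (ha : a ∉ s) :
    (Q.addSing ha).parts = insert {a} Q.parts := rfl

/-- Add a new element `a` to the block `c` of `Q`. -/
def Finpartition.addToBlock (Q : Finpartition s) {c : Finset α} (hc : c ∈ Q.parts)
    (ha : a ∉ s) : Finpartition (insert a s) where
  parts := insert (insert a c) (Q.parts.erase c)
  supIndep := by
    rw [Finset.supIndep_iff_pairwiseDisjoint]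
    have key : ∀ d ∈ Q.parts.erase c, Disjoint (insert a c) d := by
      intro d hd
      rw [Finset.mem_erase] at hd
      rw [Finset.disjoint_insert_left]
      constructor
      · exact fun h => ha (Q.le hd.2 h)
      · exact Q.disjoint hc hd.2 (Ne.symm hd.1)
    rintro x hx y hy hxy
    simp only [coe_insert, Set.mem_insert_iff, mem_coe] at hx hy
    simp only [Function.onFun, id]
    rcases hx with rfl | hx <;> rcases hy with rfl | hy
    · exact absurd rfl hxy
    · exact key y hy
    · exact (key x hx).symm
    · exact Q.disjoint (Finset.mem_of_mem_erase hx) (Finset.mem_of_mem_erase hy) hxy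
  sup_parts := by
    ext x
    simp only [Finset.sup_eq_biUnion, Finset.mem_biUnion, id, Finset.mem_insert]
    constructor
    · rintro ⟨d, rfl | hd, hxd⟩
      · rcases Finset.mem_insert.1 hxd with rfl | hxc
        · exact Or.inl rfl
        · exact Or.inr (Q.le hc hxc)
      · exact Or.inr (Q.le (Finset.mem_of_mem_erase hd) hxd)
    · rintro (rfl | hxs)
      · exact ⟨insert x c, Or.inl rfl, Finset.mem_insert_self _ _⟩
      · obtain ⟨d, hd, hxd⟩ := Q.exists_mem hxs
        by_cases hdc : d = c
        · exact ⟨insert a c, Or.inl rfl, Finset.mem_insert_of_mem (hdc ▸ hxd)⟩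
        · exact ⟨d, Or.inr (Finset.mem_erase.2 ⟨hdc, hd⟩), hxd⟩
  bot_notMem := by
    intro h
    rcases Finset.mem_insert.1 h with h | h
    · exact (Finset.insert_ne_empty a c) h.symm
    · exact Q.bot_notMem (Finset.mem_of_mem_erase h)

theorem Finpartition.addToBlock_parts (Q : Finpartition s) {c : Finset α} (hc : c ∈ Q.parts)
    (ha : a ∉ s) : (Q.addToBlock hc ha).parts = insert (insert a c) (Q.parts.erase c) := rfl

theorem not_singleton_mem_parts (Q : Finpartition s) (ha : a ∉ s) : {a} ∉ Q.parts := by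
  intro h
  exact ha (Q.le h (Finset.mem_singleton_self a))

theorem insertblock_ne_singleton (Q : Finpartition s) {c : Finset α} (hc : c ∈ Q.parts)
    (ha : a ∉ s) : insert a c ≠ {a} := by
  intro h
  obtain ⟨x, hx⟩ := Q.nonempty_of_mem_parts hc
  have hxs : x ∈ s := Q.le hc hx
  have : x ∈ ({a} : Finset α) := h ▸ Finset.mem_insert_of_mem hx
  rw [Finset.mem_singleton] at this
  exact ha (this ▸ hxs)

theorem Finpartition.addSing_parts_card (Q : Finpartition s) (ha : a ∉ s) :
    (Q.addSing ha).parts.card = Q.parts.card + 1 := by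
  rw [Q.addSing_parts ha, Finset.card_insert_of_notMem (not_singleton_mem_parts Q ha)]

theorem Finpartition.addToBlock_parts_card (Q : Finpartition s) {c : Finset α}
    (hc : c ∈ Q.parts) (ha : a ∉ s) : (Q.addToBlock hc ha).parts.card = Q.parts.card := by
  rw [Q.addToBlock_parts hc ha]
  have hnot : insert a c ∉ Q.parts.erase c := by
    intro h
    exact ha (Q.le (Finset.mem_of_mem_erase h) (Finset.mem_insert_self a c))
  rw [Finset.card_insert_of_notMem hnot, Finset.card_erase_of_mem hc,
    Nat.sub_add_cancel (Finset.card_pos.2 ⟨c, hc⟩)]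

end AddConstructions

section InsertCount

variable {s : Finset α} {a : α}

theorem insert_cancel {x : α} {A B : Finset α} (hxA : x ∉ A) (hxB : x ∉ B)
    (h : insert x A = insert x B) : A = B := by
  rw [← Finset.erase_insert hxA, h, Finset.erase_insert hxB]

theorem finset_insert_cancel {x : Finset α} {A B : Finset (Finset α)} (hxA : x ∉ A) (hxB : x ∉ B)
    (h : insert x A = insert x B) : A = B := by
  rw [← Finset.erase_insert hxA, h, Finset.erase_insert hxB]

theorem a_not_mem_of_le {Q : Finpartition s} (ha : a ∉ s) {d : Finset α} (hd : d ∈ Q.parts) :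
    a ∉ d := fun h => ha (Q.le hd h)

/-- The gluing map realizing the Stirling recurrence. -/
noncomputable def stirlingGlue (ha : a ∉ s) (k : ℕ) :
    ((Σ Q : {Q : Finpartition s // Q.parts.card = k + 1}, {c // c ∈ Q.1.parts}) ⊕
      {Q : Finpartition s // Q.parts.card = k}) →
      {P : Finpartition (insert a s) // P.parts.card = k + 1} :=
  fun x => match x with
  | Sum.inl ⟨⟨Q, hQ⟩, ⟨c, hc⟩⟩ =>
      ⟨Q.addToBlock hc ha, by rw [Q.addToBlock_parts_card hc ha]; exact hQ⟩
  | Sum.inr ⟨Q, hQ⟩ => ⟨Q.addSing ha, by rw [Q.addSing_parts_card ha, hQ]⟩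

theorem stirlingGlue_injective (ha : a ∉ s) (k : ℕ) :
    Function.Injective (stirlingGlue (s := s) ha k) := by
  rintro (⟨⟨Q, hQ⟩, ⟨c, hc⟩⟩ | ⟨Q, hQ⟩) (⟨⟨Q', hQ'⟩, ⟨c', hc'⟩⟩ | ⟨Q', hQ'⟩) h <;>
    simp only [stirlingGlue, Subtype.mk.injEq] at h
  · -- both addToBlock
    have hparts := congrArg Finpartition.parts h
    rw [Q.addToBlock_parts hc ha, Q'.addToBlock_parts hc' ha] at hparts
    have hac : a ∉ c := a_not_mem_of_le ha hc
    have hac' : a ∉ c' := a_not_mem_of_le ha hc'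
    have h1 : insert a c = insert a c' := by
      have hmem : insert a c ∈ insert (insert a c') (Q'.parts.erase c') := by
        rw [← hparts]; exact Finset.mem_insert_self _ _
      rcases Finset.mem_insert.1 hmem with h' | h'
      · exact h'
      · exact absurd (Finset.mem_insert_self a c)
          (a_not_mem_of_le ha (Finset.mem_of_mem_erase h'))
    have hcc : c = c' := insert_cancel hac hac' h1
    subst hcc
    have hQQ : Q = Q' := by
      apply Finpartition.ext
      have hnot1 : insert a c ∉ Q.parts.erase c := fun hmem =>
        (a_not_mem_of_le ha (Finset.mem_of_mem_erase hmem)) (Finset.mem_insert_self a c)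
      have hnot2 : insert a c ∉ Q'.parts.erase c := fun hmem =>
        (a_not_mem_of_le ha (Finset.mem_of_mem_erase hmem)) (Finset.mem_insert_self a c)
      rw [h1] at hparts
      have := finset_insert_cancel hnot1 hnot2 hparts
      rw [← Finset.insert_erase hc, ← Finset.insert_erase hc', this]
    subst hQQ
    rfl
  · -- addToBlock vs addSing : impossible
    exfalso
    have hparts := congrArg Finpartition.parts h
    rw [Q.addToBlock_parts hc ha, Q'.addSing_parts ha] at hparts
    have hmem : ({a} : Finset α) ∈ insert (insert a c) (Q.parts.erase c) := by
      rw [hparts]; exact Finset.mem_insert_self _ _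
    rcases Finset.mem_insert.1 hmem with h' | h'
    · exact insertblock_ne_singleton Q hc ha h'.symm
    · exact not_singleton_mem_parts Q ha (Finset.mem_of_mem_erase h')
  · -- addSing vs addToBlock : impossible
    exfalso
    have hparts := congrArg Finpartition.parts h
    rw [Q.addSing_parts ha, Q'.addToBlock_parts hc' ha] at hparts
    have hmem : ({a} : Finset α) ∈ insert (insert a c') (Q'.parts.erase c') := by
      rw [← hparts]; exact Finset.mem_insert_self _ _
    rcases Finset.mem_insert.1 hmem with h' | h'
    · exact insertblock_ne_singleton Q' hc' ha h'.symm
    · exact not_singleton_mem_parts Q' ha (Finset.mem_of_mem_erase h')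
  · -- both addSing
    have hparts := congrArg Finpartition.parts h
    rw [Q.addSing_parts ha, Q'.addSing_parts ha] at hparts
    have hQQ : Q = Q' := Finpartition.ext
      (finset_insert_cancel (not_singleton_mem_parts Q ha) (not_singleton_mem_parts Q' ha) hparts)
    subst hQQ
    rfl

theorem stirlingGlue_surjective (ha : a ∉ s) (k : ℕ) :
    Function.Surjective (stirlingGlue (s := s) ha k) := by
  rintro ⟨P, hP⟩
  have has : a ∈ insert a s := Finset.mem_insert_self a s
  have hb : P.part a ∈ P.parts := P.part_mem.2 has
  have hab : a ∈ P.part a := P.mem_part has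
  set b := P.part a with hbdef
  have hground : (insert a s) \ {a} = s := by
    ext x
    simp only [Finset.mem_sdiff, Finset.mem_insert, Finset.mem_singleton]
    constructor
    · rintro ⟨rfl | hx, hxa⟩
      · exact absurd rfl hxa
      · exact hx
    · intro hx
      exact ⟨Or.inr hx, fun h => ha (h ▸ hx)⟩
  have hother : ∀ d ∈ P.parts, d ≠ b → a ∉ d := by
    intro d hd hdb had
    exact hdb (P.part_eq_of_mem hd had).symm
  have hempty_not : (∅ : Finset α) ∉ P.parts.erase b := by
    intro h
    exact P.bot_notMem (Finset.mem_of_mem_erase h)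
  have himage : P.parts.image (· \ {a}) = insert (b \ {a}) (P.parts.erase b) := by
    conv_lhs => rw [← Finset.insert_erase hb]
    rw [Finset.image_insert]
    congr 1
    have : ∀ d ∈ P.parts.erase b, d \ {a} = id d := by
      intro d hd
      rw [Finset.sdiff_singleton_eq_erase, id,
        Finset.erase_eq_of_notMem
          (hother d (Finset.mem_of_mem_erase hd) (Finset.ne_of_mem_erase hd))]
    rw [Finset.image_congr this, Finset.image_id]
  set Q0 := (P.avoid {a}).copy hground with hQ0def
  have hQ0parts : Q0.parts = (P.parts.image (· \ {a})).erase ∅ := rfl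
  by_cases hba : b = {a}
  · -- singleton case
    have h1 : b \ {a} = ∅ := by rw [hba, Finset.sdiff_self]
    have hQ0 : Q0.parts = P.parts.erase b := by
      rw [hQ0parts, himage, h1, Finset.erase_insert hempty_not]
    have hcard : Q0.parts.card = k := by
      rw [hQ0, Finset.card_erase_of_mem hb, hP, Nat.add_sub_cancel]
    refine ⟨Sum.inr ⟨Q0, hcard⟩, ?_⟩
    apply Subtype.ext
    apply Finpartition.ext
    show (Q0.addSing ha).parts = P.parts
    rw [Q0.addSing_parts ha, hQ0, ← hba, Finset.insert_erase hb]
  · -- larger block case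
    have hcerase : b \ {a} = b.erase a := Finset.sdiff_singleton_eq_erase a b
    have hcne : b \ {a} ≠ ∅ := by
      rw [hcerase]
      intro h
      rcases (Finset.erase_eq_empty_iff b a).1 h with h' | h'
      · exact (P.nonempty_of_mem_parts hb).ne_empty h'
      · exact hba h'
    have hcnotparts : b \ {a} ∉ P.parts.erase b := by
      intro h
      have hmem : b \ {a} ∈ P.parts := Finset.mem_of_mem_erase h
      have hne : b \ {a} ≠ b := Finset.ne_of_mem_erase h
      have hdisj := P.disjoint hmem hb hne
      have hle : b \ {a} ⊆ b := Finset.sdiff_subset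
      have : b \ {a} = ∅ := by
        have := Finset.disjoint_left.1 hdisj
        rw [Finset.eq_empty_iff_forall_notMem]
        intro x hx
        exact this hx (hle hx)
      exact hcne this
    have hQ0 : Q0.parts = insert (b \ {a}) (P.parts.erase b) := by
      rw [hQ0parts, himage]
      apply Finset.erase_eq_of_notMem
      intro h
      rcases Finset.mem_insert.1 h with h' | h'
      · exact hcne h'.symm
      · exact hempty_not h'
    have hccard : Q0.parts.card = k + 1 := by
      rw [hQ0, Finset.card_insert_of_notMem hcnotparts, Finset.card_erase_of_mem hb, hP,
        Nat.add_sub_cancel]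
    have hcQ0 : b \ {a} ∈ Q0.parts := by rw [hQ0]; exact Finset.mem_insert_self _ _
    refine ⟨Sum.inl ⟨⟨Q0, hccard⟩, ⟨b \ {a}, hcQ0⟩⟩, ?_⟩
    apply Subtype.ext
    apply Finpartition.ext
    show (Q0.addToBlock hcQ0 ha).parts = P.parts
    rw [Q0.addToBlock_parts hcQ0 ha]
    have h2 : insert a (b \ {a}) = b := by rw [hcerase, Finset.insert_erase hab]
    have h3 : Q0.parts.erase (b \ {a}) = P.parts.erase b := by
      rw [hQ0, Finset.erase_insert hcnotparts]
    rw [h2, h3, Finset.insert_erase hb]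

theorem card_finpartition_insert (ha : a ∉ s) (k : ℕ) :
    Nat.card {P : Finpartition (insert a s) // P.parts.card = k + 1} =
      (k + 1) * Nat.card {Q : Finpartition s // Q.parts.card = k + 1} +
        Nat.card {Q : Finpartition s // Q.parts.card = k} := by
  classical
  rw [← Nat.card_eq_of_bijective _
    ⟨stirlingGlue_injective ha k, stirlingGlue_surjective ha k⟩]
  rw [Nat.card_sum]
  congr 1
  rw [Nat.card_eq_fintype_card, Fintype.card_sigma]
  have : ∀ Q : {Q : Finpartition s // Q.parts.card = k + 1},
      Fintype.card {c // c ∈ Q.1.parts} = k + 1 := by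
    intro Q
    rw [Fintype.card_coe]
    exact Q.2
  rw [Finset.sum_congr rfl (fun Q _ => this Q), Finset.sum_const, Finset.card_univ,
    smul_eq_mul, Nat.card_eq_fintype_card, mul_comm]

end InsertCount

theorem stirling_zero (k : ℕ) : stirling 0 k = if k = 0 then 1 else 0 := by
  have h : (Finset.univ : Finset (Fin 0)) = ∅ := rfl
  rw [stirling, h, card_finpartition_empty]

theorem stirling_succ_zero (n : ℕ) : stirling (n + 1) 0 = 0 := by
  rw [stirling, Nat.card_eq_zero]
  left
  constructor
  rintro ⟨P, hP⟩
  have : P.parts.Nonempty := P.parts_nonempty (by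
    intro h
    have : (Fin.last n) ∈ (Finset.univ : Finset (Fin (n+1))) := Finset.mem_univ _
    rw [h] at this
    simp at this)
  rw [← Finset.card_pos, hP] at this
  exact absurd this (by simp)

theorem stirling_eq_zero_of_lt {n k : ℕ} (h : n < k) : stirling n k = 0 := by
  rw [stirling, Nat.card_eq_zero]
  left
  constructor
  rintro ⟨P, hP⟩
  have := P.card_parts_le_card
  rw [hP] at this
  simp only [card_univ, Fintype.card_fin] at this
  omega

theorem stirling_succ_succ (n k : ℕ) :
    stirling (n + 1) (k + 1) = (k + 1) * stirling n (k + 1) + stirling n k := by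
  classical
  have ha : (Fin.last n) ∉ (Finset.univ.erase (Fin.last n) : Finset (Fin (n + 1))) :=
    Finset.notMem_erase _ _
  have h1 : insert (Fin.last n) (Finset.univ.erase (Fin.last n)) = (Finset.univ : Finset (Fin (n + 1))) :=
    Finset.insert_erase (Finset.mem_univ _)
  have hcard : (Finset.univ.erase (Fin.last n) : Finset (Fin (n + 1))).card =
      (Finset.univ : Finset (Fin n)).card := by
    rw [Finset.card_erase_of_mem (Finset.mem_univ _)]
    simp
  have htrans : ∀ j, Nat.card {P : Finpartition (Finset.univ.erase (Fin.last n) : Finset (Fin (n + 1))) //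
      P.parts.card = j} = stirling n j := fun j => card_finpartition_transport hcard j
  rw [stirling, ← h1, card_finpartition_insert ha k, htrans, htrans]

theorem stirling_self (n : ℕ) : stirling n n = 1 := by
  induction n with
  | zero => simp [stirling_zero]
  | succ n ih =>
    rw [stirling_succ_succ, stirling_eq_zero_of_lt (Nat.lt_succ_self n), ih]
    ring

theorem stirling_one (n : ℕ) : stirling (n + 1) 1 = 1 := by
  induction n with
  | zero => simpa using stirling_self 1
  | succ n ih =>
    have := stirling_succ_succ (n + 1) 0
    rw [stirling_succ_zero] at this
    simpa [ih] using this

theorem one_le_stirling_succ (j : ℕ) : 1 ≤ stirling (j + 2) (j + 1) := by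
  have := stirling_succ_succ (j + 1) j
  rw [this]
  have h1 := stirling_self (j + 1)
  calc 1 = stirling (j+1) (j+1) := h1.symm
  _ ≤ (j + 1) * stirling (j + 1) (j + 1) + stirling (j + 1) j := by nlinarith [Nat.zero_le (stirling (j+1) j)]

/-- Numeric hyper Stirling numbers. -/
noncomputable def HS : ℕ → ℕ → ℕ → ℕ
  | 0, n, k => if n = k then 1 else 0
  | m + 1, n, k => ∑ j ∈ Finset.range (n + 1), stirling n j * HS m j k

theorem HS_zero (n k : ℕ) : HS 0 n k = if n = k then 1 else 0 := rfl

theorem HS_succ (m n k : ℕ) :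
    HS (m + 1) n k = ∑ j ∈ Finset.range (n + 1), stirling n j * HS m j k := rfl

instance hpFintype_s18 : ∀ (m : ℕ) {α : Type} [DecidableEq α] (s : Finset α),
    Fintype (HyperPartition m s)
  | 0, _, _, _ => inferInstanceAs (Fintype PUnit)
  | m + 1, α, _, s =>
    letI : ∀ P : Finpartition s, Fintype (HyperPartition m P.parts) :=
      fun P => hpFintype_s18 m P.parts
    inferInstanceAs (Fintype ((P : Finpartition s) × HyperPartition m P.parts))

theorem outerBlocks_succ (m : ℕ) {α : Type} [DecidableEq α] {s : Finset α}
    (p : (P : Finpartition s) × HyperPartition m P.parts) :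
    HyperPartition.outerBlocks (m + 1) (show HyperPartition (m + 1) s from p) =
      HyperPartition.outerBlocks m p.2 := by
  cases m with
  | zero => rfl
  | succ m => rfl

theorem hyper_count : ∀ (m : ℕ) {α : Type} [inst : DecidableEq α] (s : Finset α) (k : ℕ),
    Nat.card {p : HyperPartition m s // HyperPartition.outerBlocks m p = k} = HS m s.card k := by
  intro m
  induction m with
  | zero =>
    intro α inst s k
    rw [HS_zero]
    split_ifs with h
    · rw [Nat.card_eq_one_iff_unique]
      exact ⟨⟨fun a b => Subtype.ext rfl⟩, ⟨⟨PUnit.unit, h⟩⟩⟩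
    · rw [Nat.card_eq_zero]
      left
      exact ⟨fun p => h p.2⟩
  | succ m ih =>
    intro α inst s k
    classical
    have heq : Nat.card {p : HyperPartition (m + 1) s // HyperPartition.outerBlocks (m + 1) p = k}
        = Nat.card (Σ P : Finpartition s,
            {q : HyperPartition m P.parts // HyperPartition.outerBlocks m q = k}) := by
      apply Nat.card_congr
      exact ⟨fun x => ⟨x.1.1, ⟨x.1.2, by rw [← outerBlocks_succ m x.1]; exact x.2⟩⟩,
        fun x => ⟨⟨x.1, x.2.1⟩, by rw [outerBlocks_succ m ⟨x.1, x.2.1⟩]; exact x.2.2⟩,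
        fun x => rfl, fun x => rfl⟩
    rw [heq, Nat.card_eq_fintype_card, Fintype.card_sigma]
    have hfib : ∀ P : Finpartition s,
        Fintype.card {q : HyperPartition m P.parts // HyperPartition.outerBlocks m q = k}
          = HS m P.parts.card k := by
      intro P
      rw [← Nat.card_eq_fintype_card]
      exact ih P.parts k
    rw [Finset.sum_congr rfl fun P _ => hfib P]
    rw [HS_succ]
    have hfw := Finset.sum_fiberwise_of_maps_to
      (s := (Finset.univ : Finset (Finpartition s))) (t := Finset.range (s.card + 1))
      (g := fun P => P.parts.card)
      (fun P _ => Finset.mem_range.2 (Nat.lt_succ_of_le P.card_parts_le_card))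
      (fun P => HS m P.parts.card k)
    rw [← hfw]
    apply Finset.sum_congr rfl
    intro j hj
    have : ∀ P ∈ Finset.univ.filter (fun P : Finpartition s => P.parts.card = j),
        HS m P.parts.card k = HS m j k := by
      intro P hP
      rw [(Finset.mem_filter.1 hP).2]
    rw [Finset.sum_congr rfl this, Finset.sum_const, smul_eq_mul]
    congr 1
    have : (Finset.univ.filter (fun P : Finpartition s => P.parts.card = j)).card
        = Nat.card {P : Finpartition s // P.parts.card = j} := by
      rw [Nat.card_eq_fintype_card, Fintype.card_subtype]
    rw [this, card_finpartition_transport (t := (Finset.univ : Finset (Fin s.card)))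
      (by simp) j]
    rfl

theorem hyperStirling_eq_HS (m n k : ℕ) : hyperStirling m n k = HS m n k := by
  rw [hyperStirling, hyper_count m (Finset.univ : Finset (Fin n)) k]
  congr 1
  simp

theorem HS_eq_zero_of_lt : ∀ (m : ℕ) {n k : ℕ}, n < k → HS m n k = 0 := by
  intro m
  induction m with
  | zero => intro n k h; rw [HS_zero, if_neg (by omega)]
  | succ m ih =>
    intro n k h
    rw [HS_succ]
    apply Finset.sum_eq_zero
    intro j hj
    rw [ih (lt_of_le_of_lt (Nat.lt_succ_iff.1 (Finset.mem_range.1 hj)) h), mul_zero]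

theorem HS_zero_right : ∀ (m : ℕ) {n : ℕ}, 1 ≤ n → HS m n 0 = 0 := by
  intro m
  induction m with
  | zero => intro n h; rw [HS_zero, if_neg (by omega)]
  | succ m ih =>
    intro n h
    rw [HS_succ]
    apply Finset.sum_eq_zero
    intro j hj
    rcases Nat.eq_zero_or_pos j with rfl | hj'
    · obtain ⟨n', rfl⟩ := Nat.exists_eq_add_of_le h
      rw [add_comm, stirling_succ_zero, zero_mul]
    · rw [ih hj', mul_zero]

theorem HS_comm : ∀ (m n k : ℕ),
    HS (m + 1) n k = ∑ i ∈ Finset.range (n + 1), stirling i k * HS m n i := by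
  intro m
  induction m with
  | zero =>
    intro n k
    rw [HS_succ]
    have hl : ∀ j, stirling n j * HS 0 j k = if j = k then stirling n j else 0 := by
      intro j; rw [HS_zero]; split_ifs <;> simp
    have hr : ∀ i, stirling i k * HS 0 n i = if n = i then stirling i k else 0 := by
      intro i; rw [HS_zero]; split_ifs <;> simp
    rw [Finset.sum_congr rfl fun j _ => hl j, Finset.sum_congr rfl fun i _ => hr i,
      Finset.sum_ite_eq' (Finset.range (n + 1)) k (fun j => stirling n j),
      Finset.sum_ite_eq (Finset.range (n + 1)) n (fun i => stirling i k),
      if_pos (Finset.mem_range.2 (Nat.lt_succ_self n))]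
    rcases le_or_gt k n with h | h
    · rw [if_pos (Finset.mem_range.2 (Nat.lt_succ_of_le h))]
    · rw [stirling_eq_zero_of_lt h, if_neg (by simp; omega)]
  | succ m ih =>
    intro n k
    rw [HS_succ]
    have step1 : ∀ j ∈ Finset.range (n + 1),
        stirling n j * HS (m + 1) j k =
          ∑ i ∈ Finset.range (n + 1), stirling n j * (stirling i k * HS m j i) := by
      intro j hj
      rw [ih j k, Finset.mul_sum]
      apply Finset.sum_subset
      · exact Finset.range_subset_range.2 (Nat.succ_le_succ (Nat.lt_succ_iff.1 (Finset.mem_range.1 hj)))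
      · intro i _ hi
        rw [HS_eq_zero_of_lt m (by
          rw [Finset.mem_range] at hi
          omega), mul_zero, mul_zero]
    rw [Finset.sum_congr rfl step1, Finset.sum_comm]
    apply Finset.sum_congr rfl
    intro i _
    rw [HS_succ, Finset.mul_sum]
    apply Finset.sum_congr rfl
    intro j _
    ring

theorem coeff_psComp (f g : PowerSeries ℚ) (n : ℕ) :
    PowerSeries.coeff (R := ℚ) n (psComp f g) =
      ∑ i ∈ Finset.range (n + 1), PowerSeries.coeff (R := ℚ) i f * PowerSeries.coeff (R := ℚ) n (g ^ i) := by
  simp [psComp, PowerSeries.coeff_mk, map_sum, PowerSeries.coeff_C_mul]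

theorem coeff_pow_eq_zero {g : PowerSeries ℚ} (hg : PowerSeries.constantCoeff (R := ℚ) g = 0)
    {n i : ℕ} (h : n < i) : PowerSeries.coeff (R := ℚ) n (g ^ i) = 0 := by
  obtain ⟨w, rfl⟩ := (PowerSeries.X_dvd_iff).2 hg
  rw [mul_pow, PowerSeries.coeff_mul]
  apply Finset.sum_eq_zero
  rintro ⟨a, b⟩ hab
  rw [Finset.HasAntidiagonal.mem_antidiagonal] at hab
  rw [PowerSeries.coeff_X_pow, if_neg (by omega), zero_mul]

theorem coeff_psComp_ge (f g : PowerSeries ℚ) (hg : PowerSeries.constantCoeff (R := ℚ) g = 0)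
    {n N : ℕ} (hN : n < N) :
    PowerSeries.coeff (R := ℚ) n (psComp f g) =
      ∑ i ∈ Finset.range N, PowerSeries.coeff (R := ℚ) i f * PowerSeries.coeff (R := ℚ) n (g ^ i) := by
  rw [coeff_psComp]
  apply Finset.sum_subset (Finset.range_subset_range.2 hN)
  intro i _ hi
  rw [Finset.mem_range, not_lt] at hi
  rw [coeff_pow_eq_zero hg (by omega), mul_zero]

theorem psComp_one (g : PowerSeries ℚ) : psComp 1 g = 1 := by
  ext n
  rw [coeff_psComp]
  rw [Finset.sum_eq_single 0]
  · simp
  · intro i _ hi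
    rw [PowerSeries.coeff_one, if_neg hi, zero_mul]
  · simp

theorem psComp_sub (f₁ f₂ g : PowerSeries ℚ) :
    psComp (f₁ - f₂) g = psComp f₁ g - psComp f₂ g := by
  ext n
  rw [map_sub, coeff_psComp, coeff_psComp, coeff_psComp, ← Finset.sum_sub_distrib]
  apply Finset.sum_congr rfl
  intro i _
  rw [map_sub, sub_mul]

theorem psComp_mul (f₁ f₂ g : PowerSeries ℚ) (hg : PowerSeries.constantCoeff (R := ℚ) g = 0) :
    psComp (f₁ * f₂) g = psComp f₁ g * psComp f₂ g := by
  ext n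
  set N := n + 1 with hN
  set F : ℕ × ℕ → ℚ := fun p =>
    PowerSeries.coeff (R := ℚ) p.1 f₁ * PowerSeries.coeff (R := ℚ) p.2 f₂ *
      PowerSeries.coeff (R := ℚ) n (g ^ (p.1 + p.2)) with hF
  have hL : PowerSeries.coeff (R := ℚ) n (psComp (f₁ * f₂) g) =
      ∑ l ∈ Finset.range N, ∑ p ∈ Finset.HasAntidiagonal.antidiagonal l, F p := by
    rw [coeff_psComp]
    apply Finset.sum_congr rfl
    intro l _
    rw [PowerSeries.coeff_mul, Finset.sum_mul]
    apply Finset.sum_congr rfl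
    intro p hp
    rw [Finset.HasAntidiagonal.mem_antidiagonal] at hp
    simp only [hF]
    rw [hp]
  have hR : PowerSeries.coeff (R := ℚ) n (psComp f₁ g * psComp f₂ g) =
      ∑ p ∈ Finset.range N ×ˢ Finset.range N, F p := by
    rw [PowerSeries.coeff_mul]
    have h1 : ∀ q ∈ Finset.HasAntidiagonal.antidiagonal n,
        PowerSeries.coeff (R := ℚ) q.1 (psComp f₁ g) * PowerSeries.coeff (R := ℚ) q.2 (psComp f₂ g) =
        ∑ p ∈ Finset.range N ×ˢ Finset.range N,
          (PowerSeries.coeff (R := ℚ) p.1 f₁ * PowerSeries.coeff (R := ℚ) q.1 (g ^ p.1)) *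
          (PowerSeries.coeff (R := ℚ) p.2 f₂ * PowerSeries.coeff (R := ℚ) q.2 (g ^ p.2)) := by
      intro q hq
      rw [Finset.HasAntidiagonal.mem_antidiagonal] at hq
      rw [coeff_psComp_ge f₁ g hg (show q.1 < N by omega),
        coeff_psComp_ge f₂ g hg (show q.2 < N by omega), Finset.sum_mul_sum,
        ← Finset.sum_product']
    rw [Finset.sum_congr rfl h1, Finset.sum_comm]
    apply Finset.sum_congr rfl
    intro p _
    have : ∀ q ∈ Finset.HasAntidiagonal.antidiagonal n,
        (PowerSeries.coeff (R := ℚ) p.1 f₁ * PowerSeries.coeff (R := ℚ) q.1 (g ^ p.1)) *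
          (PowerSeries.coeff (R := ℚ) p.2 f₂ * PowerSeries.coeff (R := ℚ) q.2 (g ^ p.2)) =
        (PowerSeries.coeff (R := ℚ) p.1 f₁ * PowerSeries.coeff (R := ℚ) p.2 f₂) *
          (PowerSeries.coeff (R := ℚ) q.1 (g ^ p.1) * PowerSeries.coeff (R := ℚ) q.2 (g ^ p.2)) := by
      intro q _; ring
    rw [Finset.sum_congr rfl this, ← Finset.mul_sum, ← PowerSeries.coeff_mul, ← pow_add]
  rw [hL, hR]
  have hbi : ((Finset.range N).biUnion Finset.HasAntidiagonal.antidiagonal) =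
      (Finset.range N ×ˢ Finset.range N).filter (fun p => p.1 + p.2 < N) := by
    ext p
    simp only [Finset.mem_biUnion, Finset.mem_range, Finset.HasAntidiagonal.mem_antidiagonal,
      Finset.mem_filter, Finset.mem_product]
    constructor
    · rintro ⟨l, hl, rfl⟩; omega
    · rintro ⟨⟨h1, h2⟩, h3⟩; exact ⟨p.1 + p.2, h3, rfl⟩
  have hdisj : ∀ l₁ ∈ Finset.range N, ∀ l₂ ∈ Finset.range N, l₁ ≠ l₂ →
      Disjoint (Finset.HasAntidiagonal.antidiagonal l₁) (Finset.HasAntidiagonal.antidiagonal l₂) := by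
    intro l₁ _ l₂ _ hne
    rw [Finset.disjoint_left]
    intro p hp1 hp2
    rw [Finset.HasAntidiagonal.mem_antidiagonal] at hp1 hp2
    exact hne (hp1 ▸ hp2)
  rw [← Finset.sum_biUnion hdisj, hbi]
  apply Finset.sum_filter_of_ne
  intro p _ hFp
  by_contra hc
  rw [not_lt] at hc
  apply hFp
  simp only [hF]
  rw [coeff_pow_eq_zero hg (by omega), mul_zero]

theorem psComp_pow (f g : PowerSeries ℚ) (hg : PowerSeries.constantCoeff (R := ℚ) g = 0) (k : ℕ) :
    psComp (f ^ k) g = (psComp f g) ^ k := by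
  induction k with
  | zero => rw [pow_zero, pow_zero, psComp_one]
  | succ k ih => rw [pow_succ, pow_succ, psComp_mul _ _ _ hg, ih]

theorem exp_deriv : PowerSeries.derivative ℚ (PowerSeries.exp ℚ) = PowerSeries.exp ℚ := by
  ext n
  rw [PowerSeries.coeff_derivative, PowerSeries.coeff_exp, PowerSeries.coeff_exp]
  simp only [Algebra.algebraMap_self, map_div₀, map_one, RingHom.id_apply]
  rw [Nat.factorial_succ, Nat.cast_mul, Nat.cast_add, Nat.cast_one]
  have h1 : ((n : ℚ) + 1) ≠ 0 := by positivity
  have h2 : ((n.factorial : ℚ)) ≠ 0 := by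
    exact_mod_cast Nat.cast_ne_zero.2 (Nat.factorial_ne_zero n)
  field_simp

theorem constCoeff_exp_sub_one :
    PowerSeries.constantCoeff (R := ℚ) (PowerSeries.exp ℚ - 1) = 0 := by
  rw [map_sub, PowerSeries.constantCoeff_exp, map_one, sub_self]

theorem deriv_F (j : ℕ) :
    PowerSeries.derivative ℚ ((PowerSeries.exp ℚ - 1) ^ (j + 1)) =
      (j + 1 : ℕ) • ((PowerSeries.exp ℚ - 1) ^ (j + 1) + (PowerSeries.exp ℚ - 1) ^ j) := by
  rw [Derivation.leibniz_pow]
  have h1 : PowerSeries.derivative ℚ (PowerSeries.exp ℚ - 1) = PowerSeries.exp ℚ := by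
    rw [map_sub, exp_deriv, Derivation.map_one_eq_zero, sub_zero]
  rw [h1]
  rw [Nat.add_sub_cancel]
  rw [smul_eq_mul]
  congr 1
  have : PowerSeries.exp ℚ = (PowerSeries.exp ℚ - 1) + 1 := by ring
  rw [this]
  ring

theorem base_identity : ∀ (n j : ℕ),
    (n.factorial : ℚ) * PowerSeries.coeff (R := ℚ) n ((PowerSeries.exp ℚ - 1) ^ j) =
      (j.factorial : ℚ) * (stirling n j : ℚ) := by
  intro n
  induction n with
  | zero =>
    intro j
    rw [PowerSeries.coeff_zero_eq_constantCoeff, map_pow, constCoeff_exp_sub_one]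
    cases j with
    | zero => simp [stirling_zero]
    | succ j => simp [stirling_zero, zero_pow]
  | succ n ih =>
    intro j
    cases j with
    | zero =>
      rw [pow_zero, stirling_succ_zero, PowerSeries.coeff_one, if_neg (Nat.succ_ne_zero n)]
      simp
    | succ j =>
      have hD := congrArg (PowerSeries.coeff (R := ℚ) n) (deriv_F j)
      rw [PowerSeries.coeff_derivative, map_nsmul, map_add, nsmul_eq_mul] at hD
      -- hD : coeff (n+1) (F (j+1)) * (n+1) = (j+1) * (coeff n F(j+1) + coeff n F j)
      have key : ((n + 1).factorial : ℚ) * PowerSeries.coeff (R := ℚ) (n + 1)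
          ((PowerSeries.exp ℚ - 1) ^ (j + 1)) =
          ((j : ℚ) + 1) * ((n.factorial : ℚ) * PowerSeries.coeff (R := ℚ) n ((PowerSeries.exp ℚ - 1) ^ (j + 1))
            + (n.factorial : ℚ) * PowerSeries.coeff (R := ℚ) n ((PowerSeries.exp ℚ - 1) ^ j)) := by
        rw [Nat.factorial_succ, Nat.cast_mul]
        push_cast at hD ⊢
        nlinarith [hD]
      rw [key, ih (j + 1), ih j, stirling_succ_succ n j]
      rw [Nat.factorial_succ (j)]
      push_cast
      ring

theorem constCoeff_E (m : ℕ) : PowerSeries.constantCoeff (R := ℚ) (E m) = 1 := by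
  induction m with
  | zero => exact PowerSeries.constantCoeff_exp
  | succ m ih =>
    show PowerSeries.constantCoeff (R := ℚ) (psComp (PowerSeries.exp ℚ) (E m - 1)) = 1
    rw [← PowerSeries.coeff_zero_eq_constantCoeff_apply, coeff_psComp]
    rw [Finset.range_one, Finset.sum_singleton, pow_zero]
    simp [PowerSeries.coeff_exp]

theorem constCoeff_u (m : ℕ) : PowerSeries.constantCoeff (R := ℚ) (E m - 1) = 0 := by
  rw [map_sub, constCoeff_E, map_one, sub_self]

theorem bridge : ∀ (m n k : ℕ),
    (n.factorial : ℚ) * PowerSeries.coeff (R := ℚ) n ((E m - 1) ^ k) =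
      (k.factorial : ℚ) * (HS (m + 1) n k : ℚ) := by
  intro m
  induction m with
  | zero =>
    intro n k
    show (n.factorial : ℚ) * PowerSeries.coeff (R := ℚ) n ((PowerSeries.exp ℚ - 1) ^ k) = _
    rw [base_identity n k]
    congr 2
    rw [HS_succ]
    have : ∀ j ∈ Finset.range (n + 1), stirling n j * HS 0 j k =
        if j = k then stirling n j else 0 := by
      intro j _
      rw [HS_zero]
      split_ifs with h <;> simp [h]
    rw [Finset.sum_congr rfl this, Finset.sum_ite_eq' (Finset.range (n + 1)) k]
    rcases le_or_gt k n with h | h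
    · rw [if_pos (Finset.mem_range.2 (by omega))]
    · rw [if_neg (by simp; omega), stirling_eq_zero_of_lt h]
  | succ m ih =>
    intro n k
    have hcomp : (E (m + 1) - 1) ^ k = psComp ((PowerSeries.exp ℚ - 1) ^ k) (E m - 1) := by
      rw [psComp_pow _ _ (constCoeff_u m), psComp_sub, psComp_one]
      rfl
    rw [hcomp, coeff_psComp, Finset.mul_sum]
    have hterm : ∀ i ∈ Finset.range (n + 1),
        (n.factorial : ℚ) * (PowerSeries.coeff (R := ℚ) i ((PowerSeries.exp ℚ - 1) ^ k) *
          PowerSeries.coeff (R := ℚ) n ((E m - 1) ^ i)) =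
        (k.factorial : ℚ) * ((stirling i k : ℚ) * (HS (m + 1) n i : ℚ)) := by
      intro i _
      have h1 := base_identity i k
      have h2 := ih n i
      have hfac : ((i.factorial : ℚ)) ≠ 0 := by
        exact_mod_cast Nat.cast_ne_zero.2 (Nat.factorial_ne_zero i)
      have e1 : PowerSeries.coeff (R := ℚ) i ((PowerSeries.exp ℚ - 1) ^ k) =
          (k.factorial : ℚ) * (stirling i k : ℚ) / (i.factorial : ℚ) := by
        field_simp
        linarith [h1]
      have e2 : (n.factorial : ℚ) * PowerSeries.coeff (R := ℚ) n ((E m - 1) ^ i) =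
          (i.factorial : ℚ) * (HS (m + 1) n i : ℚ) := h2
      calc (n.factorial : ℚ) * (PowerSeries.coeff (R := ℚ) i ((PowerSeries.exp ℚ - 1) ^ k) *
            PowerSeries.coeff (R := ℚ) n ((E m - 1) ^ i))
          = PowerSeries.coeff (R := ℚ) i ((PowerSeries.exp ℚ - 1) ^ k) *
            ((n.factorial : ℚ) * PowerSeries.coeff (R := ℚ) n ((E m - 1) ^ i)) := by ring
        _ = ((k.factorial : ℚ) * (stirling i k : ℚ) / (i.factorial : ℚ)) *
            ((i.factorial : ℚ) * (HS (m + 1) n i : ℚ)) := by rw [e1, e2]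
        _ = (k.factorial : ℚ) * ((stirling i k : ℚ) * (HS (m + 1) n i : ℚ)) := by
            field_simp
    rw [Finset.sum_congr rfl hterm, ← Finset.mul_sum]
    congr 1
    rw [HS_comm (m + 1) n k]
    push_cast
    rfl

theorem bell_eq_sum_HS (m n : ℕ) :
    bell (m + 1) n = ∑ i ∈ Finset.range (n + 1), (HS (m + 1) n i : ℚ) := by
  show (n.factorial : ℚ) * PowerSeries.coeff (R := ℚ) n (psComp (PowerSeries.exp ℚ) (E m - 1)) = _
  rw [coeff_psComp, Finset.mul_sum]
  apply Finset.sum_congr rfl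
  intro i _
  have hfac : ((i.factorial : ℚ)) ≠ 0 := by
    exact_mod_cast Nat.cast_ne_zero.2 (Nat.factorial_ne_zero i)
  rw [PowerSeries.coeff_exp]
  have h2 := bridge m n i
  simp only [Algebra.algebraMap_self, map_div₀, map_one, RingHom.id_apply]
  calc (n.factorial : ℚ) * (1 / (i.factorial : ℚ) * PowerSeries.coeff (R := ℚ) n ((E m - 1) ^ i))
      = ((n.factorial : ℚ) * PowerSeries.coeff (R := ℚ) n ((E m - 1) ^ i)) / (i.factorial : ℚ) := by
        ring
    _ = (HS (m + 1) n i : ℚ) := by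
        rw [h2, mul_comm, mul_div_assoc, div_self hfac, mul_one]

theorem HS_diag (n : ℕ) : ∀ m, HS m n n = 1 := by
  intro m
  induction m with
  | zero => rw [HS_zero, if_pos rfl]
  | succ m ih =>
    rw [HS_comm]
    rw [Finset.sum_eq_single n]
    · rw [stirling_self, ih, one_mul]
    · intro i hi hne
      rcases lt_or_gt_of_ne hne with h | h
      · rw [stirling_eq_zero_of_lt h, zero_mul]
      · rw [Finset.mem_range] at hi; omega
    · intro h; exact absurd (Finset.mem_range.2 (Nat.lt_succ_self n)) h

theorem HS_upper (n : ℕ) : ∀ d : ℕ, ∃ A : ℕ, 0 < A ∧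
    ∀ m k, 1 ≤ k → n - k ≤ d → HS m n k ≤ A * (m + 1) ^ (n - k) := by
  intro d
  induction d with
  | zero =>
    refine ⟨1, one_pos, ?_⟩
    intro m k _ hd
    have hk : n ≤ k := by omega
    rcases eq_or_lt_of_le hk with heq | h
    · subst heq
      rw [HS_diag n m]
      simp
    · rw [HS_eq_zero_of_lt m h]
      simp
  | succ d ih =>
    obtain ⟨A, hA, hbound⟩ := ih
    set B : ℕ := ∑ i ∈ Finset.range (n + 1), ∑ j ∈ Finset.range (n + 1), stirling i j with hB
    refine ⟨1 + B * A + A, by omega, ?_⟩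
    intro m k hk hd
    rcases le_or_gt (n - k) d with hcase | hcase
    · calc HS m n k ≤ A * (m + 1) ^ (n - k) := hbound m k hk hcase
        _ ≤ (1 + B * A + A) * (m + 1) ^ (n - k) := by
            apply Nat.mul_le_mul_right; omega
    · have hdk : n - k = d + 1 := by omega
      have hkn : k + 1 ≤ n := by omega
      -- single step bound
      have hstB : ∀ k', k' ≤ n → ∑ i ∈ Finset.range (n + 1), stirling i k' ≤ B := by
        intro k' hk'
        rw [hB]
        apply Finset.sum_le_sum
        intro i _
        apply Finset.single_le_sum (f := fun j => stirling i j) (fun j _ => Nat.zero_le _)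
        exact Finset.mem_range.2 (by omega)
      have step : ∀ m', HS (m' + 1) n k ≤ HS m' n k + B * (A * (m' + 1) ^ d) := by
        intro m'
        rw [HS_comm]
        rw [← Finset.add_sum_erase (Finset.range (n + 1)) _ (Finset.mem_range.2 (by omega : k < n + 1))]
        rw [stirling_self, one_mul]
        apply Nat.add_le_add_left
        calc ∑ i ∈ (Finset.range (n + 1)).erase k, stirling i k * HS m' n i
            ≤ ∑ i ∈ (Finset.range (n + 1)).erase k, stirling i k * (A * (m' + 1) ^ d) := by
              apply Finset.sum_le_sum
              intro i hi
              have hine : i ≠ k := Finset.ne_of_mem_erase hi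
              have hilt : i < n + 1 := Finset.mem_range.1 (Finset.mem_of_mem_erase hi)
              rcases lt_or_gt_of_ne hine with hlt | hgt
              · rw [stirling_eq_zero_of_lt hlt, zero_mul, zero_mul]
              · apply Nat.mul_le_mul_left
                calc HS m' n i ≤ A * (m' + 1) ^ (n - i) := hbound m' i (by omega) (by omega)
                  _ ≤ A * (m' + 1) ^ d := by
                      apply Nat.mul_le_mul_left
                      apply Nat.pow_le_pow_right (by omega) (by omega)
          _ ≤ ∑ i ∈ Finset.range (n + 1), stirling i k * (A * (m' + 1) ^ d) :=
              Finset.sum_le_sum_of_subset (Finset.erase_subset _ _)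
          _ = (∑ i ∈ Finset.range (n + 1), stirling i k) * (A * (m' + 1) ^ d) :=
              (Finset.sum_mul _ _ _).symm
          _ ≤ B * (A * (m' + 1) ^ d) :=
              Nat.mul_le_mul_right _ (hstB k (by omega))
      have claim2 : ∀ m', HS m' n k ≤ 1 + B * A * (m' * (m' + 1) ^ d) := by
        intro m'
        induction m' with
        | zero =>
          rw [HS_zero]
          split_ifs <;> omega
        | succ m' ih2 =>
          calc HS (m' + 1) n k ≤ HS m' n k + B * (A * (m' + 1) ^ d) := step m'
            _ ≤ 1 + B * A * (m' * (m' + 1) ^ d) + B * (A * (m' + 1) ^ d) := by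
                apply Nat.add_le_add_right ih2
            _ = 1 + B * A * ((m' + 1) * (m' + 1) ^ d) := by ring
            _ ≤ 1 + B * A * ((m' + 1) * (m' + 1 + 1) ^ d) := by
                have := Nat.pow_le_pow_left (show m' + 1 ≤ m' + 2 by omega) d
                apply Nat.add_le_add_left
                apply Nat.mul_le_mul_left
                apply Nat.mul_le_mul_left
                exact this
      rw [hdk]
      have hpow1 : 1 ≤ (m + 1) ^ (d + 1) := Nat.one_le_pow _ _ (by omega)
      have hpow2 : m * (m + 1) ^ d ≤ (m + 1) ^ (d + 1) := by
        rw [pow_succ, mul_comm ((m+1)^d) (m+1)]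
        exact Nat.mul_le_mul_right _ (by omega)
      calc HS m n k ≤ 1 + B * A * (m * (m + 1) ^ d) := claim2 m
        _ ≤ 1 * (m + 1) ^ (d + 1) + B * A * (m + 1) ^ (d + 1) := by
            apply Nat.add_le_add
            · omega
            · exact Nat.mul_le_mul_left _ hpow2
        _ ≤ (1 + B * A + A) * (m + 1) ^ (d + 1) := by
            rw [one_mul]
            nlinarith [Nat.zero_le (A * (m + 1) ^ (d + 1))]

theorem HS_lower (n : ℕ) (hn : 1 ≤ n) :
    ∀ m j, 1 ≤ j → j ≤ n → Nat.choose m (n - j) ≤ HS m n j := by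
  intro m
  induction m with
  | zero =>
    intro j h1 h2
    rw [HS_zero]
    rcases eq_or_lt_of_le h2 with rfl | hlt
    · simp
    · rw [Nat.choose_eq_zero_of_lt (by omega), if_neg (by omega)]
  | succ m ih =>
    intro j h1 h2
    rcases eq_or_lt_of_le h2 with rfl | hlt
    · rw [HS_diag j (m + 1), Nat.sub_self, Nat.choose_zero_right]
    · -- j < n
      rw [HS_comm]
      have hmem1 : j ∈ Finset.range (n + 1) := Finset.mem_range.2 (by omega)
      have hmem2 : j + 1 ∈ Finset.range (n + 1) := Finset.mem_range.2 (by omega)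
      have hpair : ({j, j + 1} : Finset ℕ) ⊆ Finset.range (n + 1) := by
        intro x hx
        rcases Finset.mem_insert.1 hx with rfl | hx
        · exact hmem1
        · rw [Finset.mem_singleton] at hx; subst hx; exact hmem2
      have hsum : ∑ i ∈ ({j, j + 1} : Finset ℕ), stirling i j * HS m n i ≤
          ∑ i ∈ Finset.range (n + 1), stirling i j * HS m n i :=
        Finset.sum_le_sum_of_subset hpair
      rw [Finset.sum_pair (by omega : j ≠ j + 1)] at hsum
      refine le_trans ?_ hsum
      rw [stirling_self, one_mul]
      have hst : 1 ≤ stirling (j + 1) j := by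
        rcases Nat.exists_eq_add_of_le h1 with ⟨j', rfl⟩
        have := one_le_stirling_succ j'
        convert this using 2 <;> omega
      have hnj : n - j = (n - j - 1) + 1 := by omega
      have hchoose : Nat.choose (m + 1) (n - j) =
          Nat.choose m (n - j - 1) + Nat.choose m ((n - j - 1) + 1) := by
        rw [hnj]
        exact Nat.choose_succ_succ m (n - j - 1)
      rw [hchoose, ← hnj, add_comm]
      apply Nat.add_le_add
      · exact ih j h1 (by omega)
      · calc Nat.choose m (n - j - 1) ≤ HS m n (j + 1) := by
              have := ih (j + 1) (by omega) (by omega)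
              have harg : n - (j + 1) = n - j - 1 := by omega
              rwa [harg] at this
          _ ≤ stirling (j + 1) j * HS m n (j + 1) := by
              nlinarith [Nat.zero_le (HS m n (j + 1))]

section Limit

variable (n : ℕ)

theorem T_ge_one (hn : 1 ≤ n) (m : ℕ) : 1 ≤ ∑ k ∈ Finset.Icc 1 n, HS m n k := by
  have hmem : n ∈ Finset.Icc 1 n := Finset.mem_Icc.2 ⟨hn, le_refl n⟩
  calc 1 = HS m n n := (HS_diag n m).symm
    _ ≤ ∑ k ∈ Finset.Icc 1 n, HS m n k :=
      Finset.single_le_sum (fun k _ => Nat.zero_le _) hmem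

theorem N_le (hn : 1 ≤ n) (m : ℕ) :
    ∑ k ∈ Finset.Icc 1 n, k * HS m n k ≤
      (∑ k ∈ Finset.Icc 1 n, HS m n k) + n * ∑ k ∈ Finset.Icc 2 n, HS m n k := by
  have hins : Finset.Icc 1 n = insert 1 (Finset.Icc 2 n) := by
    ext x
    simp only [Finset.mem_Icc, Finset.mem_insert]
    omega
  have h1 : (1 : ℕ) ∉ Finset.Icc 2 n := by simp
  rw [hins, Finset.sum_insert h1, Finset.sum_insert h1, one_mul, add_assoc]
  apply Nat.add_le_add_left
  calc ∑ k ∈ Finset.Icc 2 n, k * HS m n k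
      ≤ ∑ k ∈ Finset.Icc 2 n, (1 + n) * HS m n k := by
        apply Finset.sum_le_sum
        intro k hk
        rw [Finset.mem_Icc] at hk
        exact Nat.mul_le_mul_right _ (by omega)
    _ = (∑ k ∈ Finset.Icc 2 n, HS m n k) + n * ∑ k ∈ Finset.Icc 2 n, HS m n k := by
        rw [← Finset.mul_sum]
        ring

theorem D_le (hn : 1 ≤ n) : ∃ A : ℕ, 0 < A ∧ ∀ m,
    ∑ k ∈ Finset.Icc 2 n, HS m n k ≤ n * A * (m + 1) ^ (n - 2) := by
  obtain ⟨A, hA, hbound⟩ := HS_upper n n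
  refine ⟨A, hA, ?_⟩
  intro m
  calc ∑ k ∈ Finset.Icc 2 n, HS m n k
      ≤ ∑ _k ∈ Finset.Icc 2 n, A * (m + 1) ^ (n - 2) := by
        apply Finset.sum_le_sum
        intro k hk
        rw [Finset.mem_Icc] at hk
        calc HS m n k ≤ A * (m + 1) ^ (n - k) := hbound m k (by omega) (by omega)
          _ ≤ A * (m + 1) ^ (n - 2) := by
            apply Nat.mul_le_mul_left
            apply Nat.pow_le_pow_right (by omega) (by omega)
    _ = (Finset.Icc 2 n).card * (A * (m + 1) ^ (n - 2)) := by
        rw [Finset.sum_const, smul_eq_mul]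
    _ ≤ n * A * (m + 1) ^ (n - 2) := by
        have : (Finset.Icc 2 n).card ≤ n := by
          rw [Nat.card_Icc]
          omega
        calc (Finset.Icc 2 n).card * (A * (m + 1) ^ (n - 2))
            ≤ n * (A * (m + 1) ^ (n - 2)) := Nat.mul_le_mul_right _ this
          _ = n * A * (m + 1) ^ (n - 2) := by ring

theorem HS_limit (hn : 1 ≤ n) :
    Filter.Tendsto (fun m : ℕ =>
      (∑ k ∈ Finset.Icc 1 n, (k : ℚ) * (HS m n k : ℚ)) /
        (∑ k ∈ Finset.Icc 1 n, (HS m n k : ℚ)))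
      Filter.atTop (nhds 1) := by
  obtain ⟨A, hA, hD⟩ := D_le n hn
  set Tq : ℕ → ℚ := fun m => ∑ k ∈ Finset.Icc 1 n, (HS m n k : ℚ) with hTq
  set Nq : ℕ → ℚ := fun m => ∑ k ∈ Finset.Icc 1 n, (k : ℚ) * (HS m n k : ℚ) with hNq
  set Dq : ℕ → ℚ := fun m => ∑ k ∈ Finset.Icc 2 n, (HS m n k : ℚ) with hDq
  have hTnat : ∀ m, Tq m = ((∑ k ∈ Finset.Icc 1 n, HS m n k : ℕ) : ℚ) := by
    intro m; rw [hTq]; push_cast; ring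
  have hT1 : ∀ m, (1 : ℚ) ≤ Tq m := by
    intro m
    rw [hTnat m]
    exact_mod_cast T_ge_one n hn m
  have hT0 : ∀ m, (0 : ℚ) < Tq m := fun m => lt_of_lt_of_le one_pos (hT1 m)
  have hTN : ∀ m, Tq m ≤ Nq m := by
    intro m
    apply Finset.sum_le_sum
    intro k hk
    rw [Finset.mem_Icc] at hk
    have : (1 : ℚ) ≤ (k : ℚ) := by exact_mod_cast hk.1
    nlinarith [show (0:ℚ) ≤ (HS m n k : ℚ) by positivity]
  have hlow : ∀ m, (1 : ℚ) ≤ Nq m / Tq m := by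
    intro m
    rw [le_div_iff₀ (hT0 m), one_mul]
    exact hTN m
  -- upper bound
  set K : ℚ := (n : ℚ) * n * A * (n - 1).factorial * 2 ^ (n - 1) with hK
  have hK0 : 0 ≤ K := by positivity
  have hupper : ∀ᶠ m in Filter.atTop, Nq m / Tq m ≤ 1 + K / (m + 1) := by
    rw [Filter.eventually_atTop]
    refine ⟨2 * n + 2, ?_⟩
    intro m hm
    have hNT : Nq m ≤ Tq m + n * Dq m := by
      have := N_le n hn m
      have hcast : Nq m = ((∑ k ∈ Finset.Icc 1 n, k * HS m n k : ℕ) : ℚ) := by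
        rw [hNq]; push_cast; ring
      have hcast2 : Dq m = ((∑ k ∈ Finset.Icc 2 n, HS m n k : ℕ) : ℚ) := by
        rw [hDq]; push_cast; ring
      rw [hcast, hcast2, hTnat]
      exact_mod_cast this
    have hstep1 : Nq m / Tq m ≤ 1 + (n * Dq m) / Tq m := by
      rw [div_le_iff₀ (hT0 m), add_mul, one_mul, div_mul_cancel₀ _ (ne_of_gt (hT0 m))]
      exact hNT
    refine le_trans hstep1 ?_
    apply add_le_add_right
    -- n * Dq m / Tq m ≤ K / (m+1)
    rcases eq_or_lt_of_le hn with heq | hn2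
    · -- n = 1 : Dq = 0
      have : Dq m = 0 := by
        rw [hDq, ← heq]
        simp
      rw [this, mul_zero, zero_div]
      positivity
    · -- n ≥ 2
      have hn2' : 2 ≤ n := hn2
      have hchoosepos : 0 < Nat.choose m (n - 1) := Nat.choose_pos (by omega)
      have hTge : ((Nat.choose m (n - 1) : ℕ) : ℚ) ≤ Tq m := by
        rw [hTnat]
        have h1 : Nat.choose m (n - 1) ≤ HS m n 1 := HS_lower n hn m 1 le_rfl hn
        have h2 : HS m n 1 ≤ ∑ k ∈ Finset.Icc 1 n, HS m n k :=
          Finset.single_le_sum (fun k _ => Nat.zero_le _) (Finset.mem_Icc.2 ⟨le_rfl, hn⟩)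
        exact_mod_cast le_trans h1 h2
      have hm1pos : (0 : ℚ) < (m : ℚ) + 1 := by positivity
      rw [div_le_div_iff₀ (hT0 m) hm1pos]
      -- n * Dq m * (m + 1) ≤ K * Tq m
      have hpowstep : ((m : ℚ) + 1) ^ (n - 2) * ((m : ℚ) + 1) = ((m : ℚ) + 1) ^ (n - 1) := by
        rw [← pow_succ]
        congr 1
        omega
      have hDq_le : Dq m ≤ (n : ℚ) * A * ((m : ℚ) + 1) ^ (n - 2) := by
        have hcast2 : Dq m = ((∑ k ∈ Finset.Icc 2 n, HS m n k : ℕ) : ℚ) := by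
          rw [hDq]; push_cast; ring
        rw [hcast2]
        have := hD m
        calc ((∑ k ∈ Finset.Icc 2 n, HS m n k : ℕ) : ℚ)
            ≤ ((n * A * (m + 1) ^ (n - 2) : ℕ) : ℚ) := by exact_mod_cast this
          _ = (n : ℚ) * A * ((m : ℚ) + 1) ^ (n - 2) := by push_cast; ring
      have hDq0 : 0 ≤ Dq m := by
        rw [hDq]
        positivity
      have hstep2 : (n : ℚ) * Dq m * ((m : ℚ) + 1) ≤
          (n : ℚ) * n * A * ((m : ℚ) + 1) ^ (n - 1) := by
        calc (n : ℚ) * Dq m * ((m : ℚ) + 1)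
            ≤ (n : ℚ) * ((n : ℚ) * A * ((m : ℚ) + 1) ^ (n - 2)) * ((m : ℚ) + 1) := by
              gcongr
          _ = (n : ℚ) * n * A * (((m : ℚ) + 1) ^ (n - 2) * ((m : ℚ) + 1)) := by ring
          _ = (n : ℚ) * n * A * ((m : ℚ) + 1) ^ (n - 1) := by rw [hpowstep]
      have hpow2 : ((m : ℚ) + 1) ^ (n - 1) ≤
          2 ^ (n - 1) * (((m + 1 - (n - 1) : ℕ)) : ℚ) ^ (n - 1) := by
        have hnat : (m + 1) ^ (n - 1) ≤ 2 ^ (n - 1) * (m + 1 - (n - 1)) ^ (n - 1) := by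
          rw [← Nat.mul_pow]
          apply Nat.pow_le_pow_left
          omega
        exact_mod_cast hnat
      have hfacpos : (0 : ℚ) < (n - 1).factorial := by
        exact_mod_cast Nat.factorial_pos (n - 1)
      have hchoose : (((m + 1 - (n - 1) : ℕ)) : ℚ) ^ (n - 1) ≤
          ((n - 1).factorial : ℚ) * (Nat.choose m (n - 1) : ℚ) := by
        have h := Nat.pow_le_choose (α := ℚ) (n - 1) m
        rw [div_le_iff₀ hfacpos] at h
        calc (((m + 1 - (n - 1) : ℕ)) : ℚ) ^ (n - 1)
            = (((m + 1 - (n - 1)) ^ (n - 1) : ℕ) : ℚ) := by push_cast; ring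
          _ ≤ (Nat.choose m (n - 1) : ℚ) * ((n - 1).factorial : ℚ) := by
              exact_mod_cast h
          _ = ((n - 1).factorial : ℚ) * (Nat.choose m (n - 1) : ℚ) := by ring
      calc (n : ℚ) * Dq m * ((m : ℚ) + 1)
          ≤ (n : ℚ) * n * A * ((m : ℚ) + 1) ^ (n - 1) := hstep2
        _ ≤ (n : ℚ) * n * A * (2 ^ (n - 1) * (((m + 1 - (n - 1) : ℕ)) : ℚ) ^ (n - 1)) := by
            apply mul_le_mul_of_nonneg_left hpow2 (by positivity)
        _ ≤ (n : ℚ) * n * A *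
            (2 ^ (n - 1) * (((n - 1).factorial : ℚ) * (Nat.choose m (n - 1) : ℚ))) := by
            apply mul_le_mul_of_nonneg_left _ (by positivity)
            apply mul_le_mul_of_nonneg_left hchoose (by positivity)
        _ = K * (Nat.choose m (n - 1) : ℚ) := by rw [hK]; ring
        _ ≤ K * Tq m := mul_le_mul_of_nonneg_left hTge hK0
  -- squeeze
  have hlim : Filter.Tendsto (fun m : ℕ => 1 + K / ((m : ℚ) + 1)) Filter.atTop (nhds 1) := by
    have h1 : Filter.Tendsto (fun m : ℕ => ((m : ℚ) + 1)) Filter.atTop Filter.atTop := by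
      apply Filter.tendsto_atTop_add_const_right
      exact tendsto_natCast_atTop_atTop
    have h2 : Filter.Tendsto (fun m : ℕ => ((m : ℚ) + 1)⁻¹) Filter.atTop (nhds 0) :=
      Filter.Tendsto.inv_tendsto_atTop h1
    have h3 : Filter.Tendsto (fun m : ℕ => K * ((m : ℚ) + 1)⁻¹) Filter.atTop (nhds (K * 0)) :=
      Filter.Tendsto.const_mul K h2
    rw [mul_zero] at h3
    have h4 : Filter.Tendsto (fun m : ℕ => 1 + K * ((m : ℚ) + 1)⁻¹) Filter.atTop (nhds (1 + 0)) :=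
      Filter.Tendsto.const_add 1 h3
    rw [add_zero] at h4
    simpa [div_eq_mul_inv] using h4
  apply tendsto_of_tendsto_of_tendsto_of_le_of_le' tendsto_const_nhds hlim
  · exact Filter.Eventually.of_forall hlow
  · exact hupper

end Limit

end Aux

/-- for fixed `n ≥ 1`, the average number of outermost blocks
`Aₙ^(m) = (1/Bₙ^(m)) Σ_{k=1}^n k · S^(m)(n,k)` tends to `1` as `m → ∞`. -/
theorem stmt18 (n : ℕ) (hn : 1 ≤ n) :
    Filter.Tendsto
      (fun m : ℕ =>
        (∑ k ∈ Finset.Icc 1 n, (k : ℚ) * (hyperStirling m n k : ℚ)) / bell m n)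
      Filter.atTop (nhds 1) := by
  have hse : ∀ m k, hyperStirling m n k = HS m n k := fun m k => hyperStirling_eq_HS m n k
  apply Filter.Tendsto.congr' _ (HS_limit n hn)
  rw [Filter.eventuallyEq_iff_exists_mem]
  refine ⟨{m | 1 ≤ m}, Filter.mem_atTop 1, ?_⟩
  intro m hm
  simp only [Set.mem_setOf_eq] at hm
  obtain ⟨m', rfl⟩ : ∃ m', m = m' + 1 := ⟨m - 1, by omega⟩
  show (∑ k ∈ Finset.Icc 1 n, (k : ℚ) * (HS (m' + 1) n k : ℚ)) /
      (∑ k ∈ Finset.Icc 1 n, (HS (m' + 1) n k : ℚ)) =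
    (∑ k ∈ Finset.Icc 1 n, (k : ℚ) * (hyperStirling (m' + 1) n k : ℚ)) / bell (m' + 1) n
  congr 1
  · apply Finset.sum_congr rfl
    intro k _
    rw [hse]
  · rw [bell_eq_sum_HS m' n]
    have hrange : Finset.range (n + 1) = insert 0 (Finset.Icc 1 n) := by
      ext x
      simp only [Finset.mem_range, Finset.mem_insert, Finset.mem_Icc]
      omega
    have h0 : (0 : ℕ) ∉ Finset.Icc 1 n := by simp
    rw [hrange, Finset.sum_insert h0, HS_zero_right (m' + 1) hn]
    simp
end
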